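/- arXiv:1307.1987 — 6 statements merged into one kernel-verified Lean document; each statement's English description precedes it below -/
import Mathlib

section
/- Let D be an abelian category with a distinguished Giraud subcategory (D, C, l, i), and let (T, F) be a torsion pair on C. Then the classes T̂ := { X ∈ D | l(X) ∈ T } and F̂ := { Y ∈ D | Y ∈ S^⊥ and l(Y) ∈ F } form a torsion pair (T̂, F̂) on D which moreover satisfies i(T) ⊆ T̂, i(F) ⊆ F̂, l(T̂) = T and l(F̂) = F. -/
open CategoryTheory Limits CategoryTheory.Pretriangulated

universe w'' w' w v'' u'' v' u' v u

namespace TiltedGiraudPaper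

section Basics

variable (C : Type u) [Category.{v} C]

/-- A class of objects is closed under extensions: for every short exact sequence,
if the two outer terms belong to the class, then so does the middle term. -/
def ClosedUnderExtensions [HasZeroMorphisms C] (P : Set C) : Prop :=
  ∀ S : ShortComplex C, S.ShortExact → S.X₁ ∈ P → S.X₃ ∈ P → S.X₂ ∈ P

/-- A class of objects is closed under (existing small) inductive limits. -/
def ClosedUnderColimits (P : Set C) : Prop :=
  ∀ {J : Type v} [SmallCategory J] {F : J ⥤ C} (c : Cocone F),
    IsColimit c → (∀ j, F.obj j ∈ P) → c.pt ∈ P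

/-- A class of objects is closed under (existing small) projective limits. -/
def ClosedUnderLimits (P : Set C) : Prop :=
  ∀ {J : Type v} [SmallCategory J] {F : J ⥤ C} (c : Cone F),
    IsLimit c → (∀ j, F.obj j ∈ P) → c.pt ∈ P

/-- A torsion class: a class of objects closed under inductive limits and extensions. -/
def IsTorsionClass [HasZeroMorphisms C] (P : Set C) : Prop :=
  ClosedUnderColimits C P ∧ ClosedUnderExtensions C P

/-- A torsion-free class: a class of objects closed under projective limits and extensions. -/
def IsTorsionFreeClass [HasZeroMorphisms C] (P : Set C) : Prop :=
  ClosedUnderLimits C P ∧ ClosedUnderExtensions C P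

/-- A Serre class: for every short exact sequence, the middle term belongs to the class
if and only if both outer terms do. -/
def IsSerreClass [HasZeroMorphisms C] (P : Set C) : Prop :=
  ∀ S : ShortComplex C, S.ShortExact → (S.X₂ ∈ P ↔ (S.X₁ ∈ P ∧ S.X₃ ∈ P))

/-- A torsion pair `(torsion, torsionFree)` on an abelian category: a torsion class and a
torsion-free class with no nonzero morphisms from the first to the second, such that every
object is an extension of a torsion-free object by a torsion object. -/
structure TorsionPair [HasZeroMorphisms C] where
  torsion : Set C
  torsionFree : Set C
  isTorsionClass : IsTorsionClass C torsion
  isTorsionFreeClass : IsTorsionFreeClass C torsionFree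
  hom_eq_zero : ∀ ⦃T F : C⦄, T ∈ torsion → F ∈ torsionFree → ∀ f : T ⟶ F, f = 0
  exists_ses : ∀ A : C, ∃ (T F : C) (f : T ⟶ A) (g : A ⟶ F) (w : f ≫ g = 0),
    T ∈ torsion ∧ F ∈ torsionFree ∧ (ShortComplex.mk f g w).ShortExact

end Basics

section Functors

variable {C : Type u} [Category.{v} C] {D : Type u'} [Category.{v'} D]

/-- The essential image of a class of objects under a functor. -/
def imageSet (L : C ⥤ D) (P : Set C) : Set D :=
  {Y | ∃ X, X ∈ P ∧ Nonempty (L.obj X ≅ Y)}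

/-- The preimage of a class of objects under a functor. -/
def preimageSet (L : C ⥤ D) (P : Set D) : Set C :=
  {X | L.obj X ∈ P}

/-- The kernel of a functor: the class of objects sent to a zero object. -/
def kerSet (L : C ⥤ D) : Set C :=
  {X | IsZero (L.obj X)}

end Functors

section Perp

variable {C : Type u} [Category.{v} C]

/-- `S^⊥`: the class of objects receiving no nonzero morphism from objects of `S`. -/
def rightPerp [HasZeroMorphisms C] (S : Set C) : Set C :=
  {Y | ∀ X ∈ S, ∀ f : X ⟶ Y, f = 0}

/-- `^⊥S`: the class of objects admitting no nonzero morphism to objects of `S`. -/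
def leftPerp [HasZeroMorphisms C] (S : Set C) : Set C :=
  {X | ∀ Y ∈ S, ∀ f : X ⟶ Y, f = 0}

/-- The class of morphisms whose kernel and cokernel belong to the class `S`. -/
def serreW [HasZeroMorphisms C] (S : Set C) : MorphismProperty C := fun X Y f =>
  (∃ (K : C) (k : K ⟶ X) (w : k ≫ f = 0), K ∈ S ∧ Nonempty (IsLimit (KernelFork.ofι k w))) ∧
  (∃ (Q : C) (q : Y ⟶ Q) (w : f ≫ q = 0), Q ∈ S ∧ Nonempty (IsColimit (CokernelCofork.ofπ q w)))

end Perp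

/-- `L : C ⥤ D` exhibits `D` as the (Gabriel) quotient of `C` by the Serre class `S`:
`L` is exact, essentially surjective, its kernel is exactly `S`, and `L` is a localization
of `C` at the class of morphisms with kernel and cokernel in `S`. -/
def IsSerreQuotient {C : Type u} [Category.{v} C] [HasZeroMorphisms C]
    {D : Type u'} [Category.{v'} D] (S : Set C) (L : C ⥤ D) : Prop :=
  Nonempty (PreservesFiniteLimits L) ∧ Nonempty (PreservesFiniteColimits L) ∧
  L.EssSurj ∧ (∀ X : C, IsZero (L.obj X) ↔ X ∈ S) ∧
  L.IsLocalization (serreW S)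

section Helpers

variable {C : Type u} [Category.{v} C]

/-- A class closed under colimits is closed under isomorphisms. -/
lemma mem_of_iso_of_closedUnderColimits {P : Set C} (hP : ClosedUnderColimits C P)
    {X Y : C} (e : X ≅ Y) (hX : X ∈ P) : Y ∈ P := by
  refine hP (J := Discrete (PUnit : Type v)) (F := (Functor.const _).obj X)
    ⟨Y, ⟨fun _ => e.hom, by intro j j' f; simp⟩⟩ ?_ (fun _ => hX)
  exact
    { desc := fun s => e.inv ≫ s.ι.app ⟨PUnit.unit⟩
      fac := fun s j => by
        obtain ⟨⟨⟩⟩ := j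
        simp
      uniq := fun s m hm => by
        have h := hm ⟨PUnit.unit⟩
        dsimp at h ⊢
        rw [← h]
        simp }

/-- A class closed under limits is closed under isomorphisms. -/
lemma mem_of_iso_of_closedUnderLimits {P : Set C} (hP : ClosedUnderLimits C P)
    {X Y : C} (e : X ≅ Y) (hX : X ∈ P) : Y ∈ P := by
  refine hP (J := Discrete (PUnit : Type v)) (F := (Functor.const _).obj X)
    ⟨Y, ⟨fun _ => e.inv, by intro j j' f; simp⟩⟩ ?_ (fun _ => hX)
  exact
    { lift := fun s => s.π.app ⟨PUnit.unit⟩ ≫ e.hom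
      fac := fun s j => by
        obtain ⟨⟨⟩⟩ := j
        simp
      uniq := fun s m hm => by
        have h := hm ⟨PUnit.unit⟩
        dsimp at h ⊢
        rw [← h]
        simp }

/-- In a pullback square, if the right leg is an isomorphism then so is the top map. -/
lemma isIso_fst_of_isPullback {P X Y Z : C} {fst : P ⟶ X} {snd : P ⟶ Y} {f : X ⟶ Z}
    {g : Y ⟶ Z} (h : IsPullback fst snd f g) [IsIso g] : IsIso fst := by
  have hsq : CommSq (𝟙 X) (f ≫ inv g) f g := ⟨by simp⟩
  have h' : IsPullback (𝟙 X) (f ≫ inv g) f g := IsPullback.of_horiz_isIso hsq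
  have hh := IsPullback.isoIsPullback_hom_fst X Y h h'
  rw [Category.comp_id] at hh
  rw [← hh]
  infer_instance

end Helpers

section GiraudHelpers

variable {D : Type u} [Category.{v} D] [Abelian D]
  {C : Type u} [Category.{v} C] [Abelian C]
  (l : D ⥤ C) (i : C ⥤ D) (adj : l ⊣ i)
  [PreservesFiniteLimits l] [PreservesFiniteColimits l] [i.Full] [i.Faithful]

lemma isIso_l_map_unit (A : D) : IsIso (l.map (adj.unit.app A)) := by
  haveI : IsIso (𝟙 (l.obj A)) := inferInstance
  exact IsIso.of_isIso_fac_right (adj.left_triangle_components A)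

include i adj in
lemma isZero_l_obj_of_isZero {X : D} (hX : IsZero X) : IsZero (l.obj X) := by
  haveI := adj.isLeftAdjoint
  rw [IsZero.iff_id_eq_zero] at hX ⊢
  rw [← l.map_id, hX, l.map_zero]

lemma kernel_unit_isZero (Y : D) : IsZero (l.obj (kernel (adj.unit.app Y))) := by
  haveI := adj.isLeftAdjoint
  haveI := isIso_l_map_unit l i adj Y
  have h0 : l.map (kernel.ι (adj.unit.app Y)) = 0 := by
    have h := congrArg l.map (kernel.condition (adj.unit.app Y))
    rw [l.map_comp, l.map_zero] at h
    exact (cancel_mono (l.map (adj.unit.app Y))).1 (by rw [h, zero_comp])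
  have hm : Mono (l.map (kernel.ι (adj.unit.app Y))) :=
    preserves_mono_of_preservesLimit l _
  rw [h0] at hm
  exact @IsZero.of_mono_zero _ _ _ _ _ hm

lemma mono_unit_app_of_perp {Y : D} (hY : Y ∈ rightPerp (kerSet l)) :
    Mono (adj.unit.app Y) := by
  apply Preadditive.mono_of_cancel_zero
  intro P g hg
  rw [← kernel.lift_ι (adj.unit.app Y) g hg,
    hY _ (kernel_unit_isZero l i adj Y) (kernel.ι _), comp_zero]

include i adj in
lemma hom_zero_of_torsion_of_perp (p : TorsionPair C) {X Y : D}
    (hX : l.obj X ∈ p.torsion) (hY : l.obj Y ∈ p.torsionFree)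
    (hY' : Y ∈ rightPerp (kerSet l)) (f : X ⟶ Y) : f = 0 := by
  haveI := mono_unit_app_of_perp l i adj hY'
  rw [← cancel_mono (adj.unit.app Y), zero_comp]
  have hnat : f ≫ adj.unit.app Y = adj.unit.app X ≫ i.map (l.map f) := by
    simpa using adj.unit.naturality f
  rw [hnat, p.hom_eq_zero hX hY (l.map f), i.map_zero, comp_zero]

include i adj in
/-- Construction of the torsion part of an object of `D`. -/
lemma exists_torsion_part (p : TorsionPair C) (A : D) :
    ∃ (TA : D) (τ : TA ⟶ A), Mono τ ∧ l.obj TA ∈ p.torsion ∧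
      (∀ (B : D) (s : B ⟶ A), l.obj B ∈ p.torsion → ∃ φ : B ⟶ TA, φ ≫ τ = s) ∧
      l.obj (cokernel τ) ∈ p.torsionFree ∧
      (IsZero TA → l.obj A ∈ p.torsionFree) := by
  haveI := adj.isLeftAdjoint
  obtain ⟨T₀, F₀, t₀, g₀, w, hT₀, hF₀, hse⟩ := p.exists_ses (l.obj A)
  haveI : Mono t₀ := hse.mono_f
  haveI : Epi g₀ := hse.epi_g
  haveI : Mono (i.map t₀) := by
    haveI := adj.isRightAdjoint
    haveI := adj.rightAdjoint_preservesLimits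
    exact preserves_mono_of_preservesLimit i t₀
  have hp : IsPullback (pullback.fst (i.map t₀) (adj.unit.app A))
      (pullback.snd (i.map t₀) (adj.unit.app A)) (i.map t₀) (adj.unit.app A) :=
    IsPullback.of_hasPullback _ _
  have hlp := hp.map l
  haveI := isIso_l_map_unit l i adj A
  haveI : IsIso (l.map (pullback.fst (i.map t₀) (adj.unit.app A))) :=
    isIso_fst_of_isPullback hlp
  let e : l.obj (pullback (i.map t₀) (adj.unit.app A)) ≅ T₀ :=
    asIso (l.map (pullback.fst (i.map t₀) (adj.unit.app A))) ≪≫ asIso (adj.counit.app T₀)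
  have he : e.hom ≫ t₀ = l.map (pullback.snd (i.map t₀) (adj.unit.app A)) := by
    have h1 : l.map (i.map t₀) ≫ adj.counit.app (l.obj A) = adj.counit.app T₀ ≫ t₀ := by
      simpa using adj.counit.naturality t₀
    have h2 : l.map (pullback.fst (i.map t₀) (adj.unit.app A)) ≫ l.map (i.map t₀)
        = l.map (pullback.snd (i.map t₀) (adj.unit.app A)) ≫ l.map (adj.unit.app A) := by
      rw [← l.map_comp, ← l.map_comp, pullback.condition]
    simp only [e, Iso.trans_hom, asIso_hom, Category.assoc]
    rw [← h1, ← Category.assoc, h2, Category.assoc]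
    erw [adj.left_triangle_components]
    simp
  have hlTA : l.obj (pullback (i.map t₀) (adj.unit.app A)) ∈ p.torsion :=
    mem_of_iso_of_closedUnderColimits p.isTorsionClass.1 e.symm hT₀
  have hmax : ∀ (B : D) (s : B ⟶ A), l.obj B ∈ p.torsion →
      ∃ φ : B ⟶ pullback (i.map t₀) (adj.unit.app A),
        φ ≫ pullback.snd (i.map t₀) (adj.unit.app A) = s := by
    intro B s hB
    have h0 : l.map s ≫ g₀ = 0 := p.hom_eq_zero hB hF₀ _
    obtain ⟨ψ, hψ⟩ := hse.exact.lift' (l.map s) h0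
    replace hψ : ψ ≫ t₀ = l.map s := hψ
    have hnat : s ≫ adj.unit.app A = adj.unit.app B ≫ i.map (l.map s) := by
      simpa using adj.unit.naturality s
    have hcond : (adj.unit.app B ≫ i.map ψ) ≫ i.map t₀ = s ≫ adj.unit.app A := by
      rw [Category.assoc, ← i.map_comp, hψ, ← hnat]
    exact ⟨pullback.lift _ _ hcond, pullback.lift_snd _ _ _⟩
  have hcok : l.obj (cokernel (pullback.snd (i.map t₀) (adj.unit.app A))) ∈ p.torsionFree := by
    have hcq := CokernelCofork.mapIsColimit _
      (cokernelIsCokernel (pullback.snd (i.map t₀) (adj.unit.app A))) l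
    have ht : t₀ = e.inv ≫ l.map (pullback.snd (i.map t₀) (adj.unit.app A)) := by
      rw [← he, Iso.inv_hom_id_assoc]
    have hct := isCokernelEpiComp hcq e.inv ht
    have e2 : l.obj (cokernel (pullback.snd (i.map t₀) (adj.unit.app A))) ≅ F₀ :=
      IsColimit.coconePointUniqueUpToIso hct hse.gIsCokernel
    exact mem_of_iso_of_closedUnderLimits p.isTorsionFreeClass.1 e2.symm hF₀
  have hz : IsZero (pullback (i.map t₀) (adj.unit.app A)) → l.obj A ∈ p.torsionFree := by
    intro hz
    have hzT : IsZero T₀ := (isZero_l_obj_of_isZero l i adj hz).of_iso e.symm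
    have ht0 : t₀ = 0 := hzT.eq_of_src _ _
    haveI : Mono g₀ := hse.exact.mono_g ht0
    haveI : IsIso g₀ := isIso_of_mono_of_epi _
    exact mem_of_iso_of_closedUnderLimits p.isTorsionFreeClass.1 (asIso g₀).symm hF₀
  exact ⟨_, _, inferInstance, hlTA, hmax, hcok, hz⟩

include i adj in
/-- The cokernel of the torsion part lies in `(Ker l)^⊥`. -/
lemma cokernel_torsionPart_perp (p : TorsionPair C) {TA A : D} (τ : TA ⟶ A) [Mono τ]
    (hlT : l.obj TA ∈ p.torsion)
    (hmax : ∀ (B : D) (s : B ⟶ A), l.obj B ∈ p.torsion → ∃ φ : B ⟶ TA, φ ≫ τ = s) :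
    cokernel τ ∈ rightPerp (kerSet l) := by
  haveI := adj.isLeftAdjoint
  intro K hK f
  replace hK : IsZero (l.obj K) := hK
  have hlf : l.map f = 0 := hK.eq_of_src _ _
  have hp : IsPullback (pullback.fst f (cokernel.π τ)) (pullback.snd f (cokernel.π τ))
      f (cokernel.π τ) := IsPullback.of_hasPullback _ _
  have hlp := hp.map l
  have w1 : l.map (pullback.snd f (cokernel.π τ)) ≫ l.map (cokernel.π τ) = 0 := by
    rw [← l.map_comp, ← pullback.condition, l.map_comp, hlf, comp_zero]
  have hklim : IsLimit (KernelFork.ofι (l.map (pullback.snd f (cokernel.π τ))) w1) := by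
    refine KernelFork.IsLimit.ofι _ _
      (fun {W} k hk => hlp.lift 0 k (by simp [hk]))
      (fun {W} k hk => hlp.lift_snd _ _ _) ?_
    intro W k hk m hm
    apply hlp.hom_ext
    · exact hK.eq_of_tgt _ _
    · rw [hlp.lift_snd, hm]
  have hcq := CokernelCofork.mapIsColimit _ (cokernelIsCokernel τ) l
  haveI : Mono (l.map τ) := preserves_mono_of_preservesLimit l τ
  have hk2 := Abelian.monoIsKernelOfCokernel _ hcq
  have e' : l.obj (pullback f (cokernel.π τ)) ≅ l.obj TA :=
    hklim.conePointUniqueUpToIso hk2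
  have hmem : l.obj (pullback f (cokernel.π τ)) ∈ p.torsion :=
    mem_of_iso_of_closedUnderColimits p.isTorsionClass.1 e'.symm hlT
  obtain ⟨φ, hφ⟩ := hmax _ (pullback.snd f (cokernel.π τ)) hmem
  have h0 : pullback.fst f (cokernel.π τ) ≫ f = 0 := by
    rw [pullback.condition, ← hφ, Category.assoc, cokernel.condition, comp_zero]
  exact zero_of_epi_comp (pullback.fst f (cokernel.π τ)) h0

end GiraudHelpers

/-- **Proposition.** Let `(D, C, l, i)` be a distinguished Giraud subcategory and `(T, F)`
a torsion pair on `C`.  Then `T̂ = l^←(T)` and `F̂ = l^←(F) ∩ (Ker l)^⊥` form a torsion pair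
on `D` with `i(T) ⊆ T̂`, `i(F) ⊆ F̂`, `l(T̂) = T` and `l(F̂) = F`. -/
theorem torsionPair_lift_along_giraud
    {D : Type u} [Category.{v} D] [Abelian D]
    {C : Type u} [Category.{v} C] [Abelian C]
    (l : D ⥤ C) (i : C ⥤ D) (adj : l ⊣ i)
    [PreservesFiniteLimits l] [PreservesFiniteColimits l] [i.Full] [i.Faithful]
    (p : TorsionPair C) :
    ∃ q : TorsionPair D,
      q.torsion = preimageSet l p.torsion ∧
      q.torsionFree = preimageSet l p.torsionFree ∩ rightPerp (kerSet l) ∧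
      (∀ T ∈ p.torsion, i.obj T ∈ q.torsion) ∧
      (∀ F ∈ p.torsionFree, i.obj F ∈ q.torsionFree) ∧
      imageSet l q.torsion = p.torsion ∧
      imageSet l q.torsionFree = p.torsionFree := by
  haveI := adj.isLeftAdjoint
  haveI := adj.leftAdjoint_preservesColimits
  -- `i(T) ⊆ T̂` and `i(F) ⊆ F̂`
  have hiT : ∀ T ∈ p.torsion, i.obj T ∈ preimageSet l p.torsion := by
    intro T hT
    exact mem_of_iso_of_closedUnderColimits p.isTorsionClass.1
      (asIso (adj.counit.app T)).symm hT
  have hiF : ∀ F ∈ p.torsionFree,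
      i.obj F ∈ preimageSet l p.torsionFree ∩ rightPerp (kerSet l) := by
    intro F hF
    refine ⟨mem_of_iso_of_closedUnderLimits p.isTorsionFreeClass.1
      (asIso (adj.counit.app F)).symm hF, ?_⟩
    intro K hK f
    replace hK : IsZero (l.obj K) := hK
    have h0 : (adj.homEquiv K F).symm f = 0 := hK.eq_of_src _ _
    have hf := (adj.homEquiv K F).apply_symm_apply f
    rw [h0] at hf
    rw [← hf, Adjunction.homEquiv_unit, i.map_zero, comp_zero]
  -- the lifted torsion pair
  refine ⟨{
    torsion := preimageSet l p.torsion
    torsionFree := preimageSet l p.torsionFree ∩ rightPerp (kerSet l)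
    isTorsionClass := ⟨?_, ?_⟩
    isTorsionFreeClass := ⟨?_, ?_⟩
    hom_eq_zero := ?_
    exists_ses := ?_ }, rfl, rfl, hiT, hiF, ?_, ?_⟩
  · -- closed under colimits
    intro J _ F c hc hmem
    exact p.isTorsionClass.1 (l.mapCocone c) (isColimitOfPreserves l hc) hmem
  · -- closed under extensions
    intro S hS h1 h3
    exact p.isTorsionClass.2 (S.map l) (hS.map_of_exact l) h1 h3
  · -- closed under limits
    intro J _ F c hc hmem
    constructor
    · obtain ⟨TA, τ, hmono, hlT, hmax, hcoker, hzero⟩ := exists_torsion_part l i adj p c.pt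
      apply hzero
      have hτ : τ = 0 := by
        apply hc.hom_ext
        intro j
        rw [zero_comp]
        exact hom_zero_of_torsion_of_perp l i adj p hlT (hmem j).1 (hmem j).2 _
      rw [hτ] at hmono
      exact @IsZero.of_mono_zero _ _ _ _ _ hmono
    · intro K hK f
      apply hc.hom_ext
      intro j
      rw [zero_comp]
      exact (hmem j).2 K hK _
  · -- closed under extensions
    intro S hS h1 h3
    refine ⟨p.isTorsionFreeClass.2 (S.map l) (hS.map_of_exact l) h1.1 h3.1, ?_⟩
    intro K hK f
    haveI := hS.mono_f
    have hg : f ≫ S.g = 0 := h3.2 K hK _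
    obtain ⟨f', hf'⟩ := hS.exact.lift' f hg
    rw [← hf', h1.2 K hK f', zero_comp]
  · -- no morphisms from torsion to torsion-free
    intro T F hT hF f
    exact hom_zero_of_torsion_of_perp l i adj p hT hF.1 hF.2 f
  · -- existence of the canonical short exact sequence
    intro A
    obtain ⟨TA, τ, hmono, hlT, hmax, hcok, _⟩ := exists_torsion_part l i adj p A
    haveI := hmono
    refine ⟨TA, cokernel τ, τ, cokernel.π τ, cokernel.condition τ, hlT,
      ⟨hcok, cokernel_torsionPart_perp l i adj p τ hlT hmax⟩, ?_⟩
    exact ⟨ShortComplex.exact_of_g_is_cokernel _ (cokernelIsCokernel τ)⟩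
  · -- `l(T̂) = T`
    ext Y
    constructor
    · rintro ⟨X, hX, ⟨e⟩⟩
      exact mem_of_iso_of_closedUnderColimits p.isTorsionClass.1 e hX
    · intro hY
      exact ⟨i.obj Y, hiT Y hY, ⟨asIso (adj.counit.app Y)⟩⟩
  · -- `l(F̂) = F`
    ext Y
    constructor
    · rintro ⟨X, hX, ⟨e⟩⟩
      exact mem_of_iso_of_closedUnderLimits p.isTorsionFreeClass.1 e hX.1
    · intro hY
      exact ⟨i.obj Y, hiF Y hY, ⟨asIso (adj.counit.app Y)⟩⟩

end TiltedGiraudPaper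
end

section
/- Let D be an abelian category with a distinguished Giraud subcategory (D, C, l, i), and suppose D is endowed with a torsion pair (X, Y). Then the class i^←(Y) := { C ∈ C | i(C) ∈ Y } is a torsion-free class on C. -/
open CategoryTheory Limits CategoryTheory.Pretriangulated

universe w'' w' w v'' u'' v' u' v u

namespace TiltedGiraudPaper

section Aux

variable {D : Type u} [Category.{v} D] [Abelian D]

/-- A class closed under limits is closed under isomorphism. -/
lemma mem_of_iso_of_closedUnderLimits_s3 {P : Set D} (hP : ClosedUnderLimits D P)
    {A B : D} (e : A ≅ B) (hB : B ∈ P) : A ∈ P := by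
  let F : Discrete PUnit.{v + 1} ⥤ D := Functor.fromPUnit B
  let c : Cone F := { pt := A, π := { app := fun _ => e.hom } }
  have hc : IsLimit c := {
    lift := fun s => s.π.app ⟨PUnit.unit⟩ ≫ e.inv
    fac := fun s j => by
      obtain ⟨⟨⟩⟩ := j
      simp [c]
    uniq := fun s m hm => by
      have h := hm ⟨PUnit.unit⟩
      dsimp [c] at h ⊢
      rw [← h, Category.assoc, e.hom_inv_id, Category.comp_id] }
  exact hP c hc (fun j => hB)

/-- An object receiving no nonzero morphism from torsion objects is torsion-free. -/
lemma mem_torsionFree_of_perp (p : TorsionPair D) {A : D}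
    (h : ∀ T ∈ p.torsion, ∀ f : T ⟶ A, f = 0) : A ∈ p.torsionFree := by
  obtain ⟨T, F, f, g, w, hT, hF, hse⟩ := p.exists_ses A
  have hf : f = 0 := h T hT f
  haveI : Epi g := hse.epi_g
  haveI : Mono g := hse.exact.mono_g hf
  haveI : IsIso g := isIso_of_mono_of_epi g
  exact mem_of_iso_of_closedUnderLimits_s3 p.isTorsionFreeClass.1 (asIso g) hF

/-- The torsion-free class is closed under subobjects. -/
lemma sub_mem_torsionFree (p : TorsionPair D) {K A : D} (m : K ⟶ A) [Mono m]
    (hA : A ∈ p.torsionFree) : K ∈ p.torsionFree :=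
  mem_torsionFree_of_perp p (fun T hT f => by
    rw [← cancel_mono m, zero_comp]
    exact p.hom_eq_zero hT hA (f ≫ m))

end Aux

/-- **Corollary.** Let `(D, C, l, i)` be a distinguished Giraud subcategory and `(X, Y)` a
torsion pair on `D`.  Then `i^←(Y) = {A | i(A) ∈ Y}` is a torsion-free class on `C`. -/
theorem preimage_torsionFree_of_giraud
    {D : Type u} [Category.{v} D] [Abelian D]
    {C : Type u} [Category.{v} C] [Abelian C]
    (l : D ⥤ C) (i : C ⥤ D) (adj : l ⊣ i)
    [PreservesFiniteLimits l] [PreservesFiniteColimits l] [i.Full] [i.Faithful]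
    (p : TorsionPair D) :
    IsTorsionFreeClass C (preimageSet i p.torsionFree) := by
  haveI := adj.isRightAdjoint
  haveI : PreservesLimitsOfSize.{v, v} i := adj.rightAdjoint_preservesLimits
  constructor
  · intro J _ F c hc hmem
    exact p.isTorsionFreeClass.1 (i.mapCone c) (isLimitOfPreserves i hc) (fun j => hmem j)
  · intro S hS h1 h3
    haveI : Mono S.f := hS.mono_f
    haveI : Epi S.g := hS.epi_g
    -- `i.map S.f` is a kernel of `i.map S.g`
    have hker : IsLimit (KernelFork.ofι (i.map S.f)
        (by rw [← i.map_comp, S.zero, i.map_zero]) :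
          KernelFork (i.map S.g)) := by
      have := KernelFork.mapIsLimit _ hS.exact.fIsKernel i
      exact IsLimit.ofIsoLimit this (Fork.ext (Iso.refl _) (by simp [KernelFork.map]))
    set e : i.obj S.X₂ ⟶ Abelian.image (i.map S.g) := Abelian.factorThruImage (i.map S.g)
    set m : Abelian.image (i.map S.g) ⟶ i.obj S.X₃ := Abelian.image.ι (i.map S.g)
    have hfac : e ≫ m = i.map S.g := Abelian.image.fac (i.map S.g)
    have hQ : Abelian.image (i.map S.g) ∈ p.torsionFree := sub_mem_torsionFree p m h3
    have w' : i.map S.f ≫ e = 0 := by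
      rw [← cancel_mono m, Category.assoc, hfac, ← i.map_comp, S.zero, i.map_zero, zero_comp]
    have hkere : IsLimit (KernelFork.ofι (i.map S.f) w' : KernelFork e) := by
      refine KernelFork.IsLimit.ofι _ _
        (fun {W'} k hk => hker.lift (KernelFork.ofι k (by rw [← hfac, ← Category.assoc, hk, zero_comp])))
        (fun {W'} k hk => ?_) (fun {W'} k hk n hn => ?_)
      · simpa using hker.fac (KernelFork.ofι k
          (by rw [← hfac, ← Category.assoc, hk, zero_comp])) WalkingParallelPair.zero
      · apply Fork.IsLimit.hom_ext hker
        have h2 := hker.fac (KernelFork.ofι k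
          (by rw [← hfac, ← Category.assoc, hk, zero_comp])) WalkingParallelPair.zero
        dsimp at h2 ⊢
        rw [hn, h2]
    haveI : Mono (i.map S.f) := mono_of_isLimit_fork hkere
    haveI : Epi e := by infer_instance
    set S' : ShortComplex D := ShortComplex.mk (i.map S.f) e w'
    have hse' : S'.ShortExact :=
      { exact := S'.exact_of_f_is_kernel hkere }
    exact p.isTorsionFreeClass.2 S' hse' h1 hQ


end TiltedGiraudPaper
end

section
/- Let D be an abelian category with a distinguished Giraud subcategory (D, C, l, i). Then the assignments (T, F) ↦ (T̂, F̂) and (X, Y) ↦ (l(X), l(Y)) give a one-to-one correspondence between torsion pairs (X, Y) on D satisfying il(Y) ⊆ Y ⊆ S^⊥ and torsion pairs (T, F) on C. -/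
open CategoryTheory Limits CategoryTheory.Pretriangulated

universe w'' w' w v'' u'' v' u' v u

namespace TiltedGiraudPaper

/- ============ HELPERS ============ -/

set_option linter.unusedSectionVars false
set_option linter.unnecessarySimpa false

section Helpers

variable {C : Type u} [Category.{v} C]

lemma isZero_of_mono_eq_zero [HasZeroMorphisms C] {X Y : C} (f : X ⟶ Y) [Mono f]
    (h : f = 0) : IsZero X := by
  rw [IsZero.iff_id_eq_zero, ← cancel_mono f, h, comp_zero, zero_comp]

lemma isZero_of_epi_eq_zero [HasZeroMorphisms C] {X Y : C} (f : X ⟶ Y) [Epi f]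
    (h : f = 0) : IsZero Y := by
  rw [IsZero.iff_id_eq_zero, ← cancel_epi f, h, comp_zero, zero_comp]

lemma TorsionPair.torsion_iso_closed [HasZeroMorphisms C] (p : TorsionPair C)
    {X Y : C} (e : X ≅ Y) (hX : X ∈ p.torsion) : Y ∈ p.torsion :=
  mem_of_iso_of_closedUnderColimits p.isTorsionClass.1 e hX

lemma TorsionPair.torsionFree_iso_closed [HasZeroMorphisms C] (p : TorsionPair C)
    {X Y : C} (e : X ≅ Y) (hX : X ∈ p.torsionFree) : Y ∈ p.torsionFree :=
  mem_of_iso_of_closedUnderLimits p.isTorsionFreeClass.1 e hX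

lemma TorsionPair.ext' [HasZeroMorphisms C] {p q : TorsionPair C}
    (h1 : p.torsion = q.torsion) (h2 : p.torsionFree = q.torsionFree) : p = q := by
  cases p; cases q
  cases h1; cases h2
  rfl

lemma mem_rightPerp_of_mono [HasZeroMorphisms C] {P : Set C} {A B : C} (m : A ⟶ B)
    [Mono m] (hB : B ∈ rightPerp P) : A ∈ rightPerp P := by
  intro Z hZ f
  rw [← cancel_mono m, hB Z hZ (f ≫ m), zero_comp]

lemma closedUnderColimits_leftPerp [HasZeroMorphisms C] (P : Set C) :
    ClosedUnderColimits C (leftPerp P) := by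
  intro J _ F c hc hmem Y hY f
  refine hc.hom_ext (fun j => ?_)
  rw [comp_zero, hmem j Y hY (c.ι.app j ≫ f)]

lemma closedUnderLimits_rightPerp [HasZeroMorphisms C] (P : Set C) :
    ClosedUnderLimits C (rightPerp P) := by
  intro J _ F c hc hmem Y hY f
  refine hc.hom_ext (fun j => ?_)
  rw [zero_comp, hmem j Y hY (f ≫ c.π.app j)]

lemma closedUnderExtensions_leftPerp [Abelian C] (P : Set C) :
    ClosedUnderExtensions C (leftPerp P) := by
  intro S hS h1 h3 Y hY f
  have := hS.epi_g
  obtain ⟨k, hk⟩ := hS.exact.desc' f (h1 Y hY (S.f ≫ f))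
  rw [← hk, h3 Y hY k, comp_zero]

lemma closedUnderExtensions_rightPerp [Abelian C] (P : Set C) :
    ClosedUnderExtensions C (rightPerp P) := by
  intro S hS h1 h3 Z hZ f
  have := hS.mono_f
  obtain ⟨k, hk⟩ := hS.exact.lift' f (h3 Z hZ (f ≫ S.g))
  rw [← hk, h1 Z hZ k, zero_comp]

lemma isIso_g_of_isZero_X₁ [Abelian C] {S : ShortComplex C} (hS : S.ShortExact)
    (h : IsZero S.X₁) : IsIso S.g := by
  have := hS.epi_g
  have := hS.mono_f
  have : Mono S.g := by
    refine Preadditive.mono_of_cancel_zero _ (fun u hu => ?_)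
    obtain ⟨t, ht⟩ := hS.exact.lift' u hu
    rw [← ht, h.eq_of_src S.f 0, comp_zero]
  exact isIso_of_mono_of_epi _

lemma isIso_f_of_isZero_X₃ [Abelian C] {S : ShortComplex C} (hS : S.ShortExact)
    (h : IsZero S.X₃) : IsIso S.f := by
  have := hS.epi_g
  have := hS.mono_f
  have : Epi S.f := by
    refine Preadditive.epi_of_cancel_zero _ (fun u hu => ?_)
    obtain ⟨t, ht⟩ := hS.exact.desc' u hu
    rw [← ht, h.eq_of_src t 0, comp_zero]
  exact isIso_of_mono_of_epi _

end Helpers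

section Builder

variable {C : Type u} [Category.{v} C] [Abelian C]

/-- Build a torsion pair from iso-closed classes with the orthogonality and
short-exact-sequence properties. -/
noncomputable def torsionPairMk' (T F : Set C)
    (hTiso : ∀ {X Y : C}, (X ≅ Y) → X ∈ T → Y ∈ T)
    (hFiso : ∀ {X Y : C}, (X ≅ Y) → X ∈ F → Y ∈ F)
    (hz : ∀ ⦃X Y : C⦄, X ∈ T → Y ∈ F → ∀ f : X ⟶ Y, f = 0)
    (hses : ∀ A : C, ∃ (X Y : C) (f : X ⟶ A) (g : A ⟶ Y) (w : f ≫ g = 0),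
      X ∈ T ∧ Y ∈ F ∧ (ShortComplex.mk f g w).ShortExact) :
    TorsionPair C := by
  have hT_eq : T = leftPerp F := by
    ext A
    constructor
    · exact fun hA Y hY f => hz hA hY f
    · intro hA
      obtain ⟨X, Y, f, g, w, hX, hY, hse⟩ := hses A
      have := hse.epi_g
      have hg0 : g = 0 := hA Y hY g
      have hzY : IsZero Y := isZero_of_epi_eq_zero g hg0
      have : IsIso f := isIso_f_of_isZero_X₃ hse hzY
      exact hTiso (asIso f) hX
  have hF_eq : F = rightPerp T := by
    ext A
    constructor
    · exact fun hA X hX f => hz hX hA f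
    · intro hA
      obtain ⟨X, Y, f, g, w, hX, hY, hse⟩ := hses A
      have := hse.mono_f
      have hf0 : f = 0 := hA X hX f
      have hzX : IsZero X := isZero_of_mono_eq_zero f hf0
      have : IsIso g := isIso_g_of_isZero_X₁ hse hzX
      exact hFiso (asIso g).symm hY
  exact
    { torsion := T
      torsionFree := F
      isTorsionClass := by
        rw [hT_eq]
        exact ⟨closedUnderColimits_leftPerp F, closedUnderExtensions_leftPerp F⟩
      isTorsionFreeClass := by
        rw [hF_eq]
        exact ⟨closedUnderLimits_rightPerp T, closedUnderExtensions_rightPerp T⟩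
      hom_eq_zero := hz
      exists_ses := hses }

@[simp] lemma torsionPairMk'_torsion (T F : Set C) (h1) (h2) (h3) (h4) :
    (torsionPairMk' T F h1 h2 h3 h4).torsion = T := rfl

@[simp] lemma torsionPairMk'_torsionFree (T F : Set C) (h1) (h2) (h3) (h4) :
    (torsionPairMk' T F h1 h2 h3 h4).torsionFree = F := rfl

lemma shortExact_congr_mid {S : ShortComplex C} (hS : S.ShortExact) {A : C}
    (e : S.X₂ ≅ A) :
    (ShortComplex.mk (S.f ≫ e.hom) (e.inv ≫ S.g)
      (by rw [Category.assoc, e.hom_inv_id_assoc, S.zero])).ShortExact := by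
  refine ShortComplex.shortExact_of_iso ?_ hS
  exact ShortComplex.isoMk (Iso.refl _) e (Iso.refl _) (by simp) (by simp)

end Builder

section Giraud

variable {D : Type u} [Category.{v} D] [Abelian D]
  {C : Type u'} [Category.{v'} C] [Abelian C]
  (l : D ⥤ C) (i : C ⥤ D)
  [PreservesFiniteLimits l] [PreservesFiniteColimits l] [i.Full] [i.Faithful]

lemma map_unit_isIso (adj : l ⊣ i) (X : D) : IsIso (l.map (adj.unit.app X)) := by
  have h : IsIso (l.map (adj.unit.app X) ≫ adj.counit.app (l.obj X)) := by
    rw [adj.left_triangle_components X]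
    exact IsIso.id _
  exact IsIso.of_isIso_comp_right _ (adj.counit.app (l.obj X))

lemma i_obj_mem_rightPerp (adj : l ⊣ i) (X : C) : i.obj X ∈ rightPerp (kerSet l) := by
  have := adj.isLeftAdjoint
  intro Z hZ f
  have h0 : (adj.homEquiv Z X).symm f = 0 := hZ.eq_of_src _ _
  have : f = adj.homEquiv Z X ((adj.homEquiv Z X).symm f) :=
    ((adj.homEquiv Z X).apply_symm_apply f).symm
  rw [this, h0, Adjunction.homEquiv_unit, i.map_zero, comp_zero]

lemma unit_mono_of_mem_rightPerp (adj : l ⊣ i) (X : D) (hX : X ∈ rightPerp (kerSet l)) :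
    Mono (adj.unit.app X) := by
  have := adj.isLeftAdjoint
  set η := adj.unit.app X with hη
  have hiso : IsIso (l.map η) := map_unit_isIso l i adj X
  have k := KernelFork.mapIsLimit _ (kernelIsKernel η) l
  have hmono : Mono (l.map (kernel.ι η)) := by
    have := mono_of_isLimit_fork k
    exact this
  have hzero : l.map (kernel.ι η) = 0 := by
    have : l.map (kernel.ι η) ≫ l.map η = 0 := by
      rw [← l.map_comp, kernel.condition, l.map_zero]
    exact zero_of_comp_mono (l.map η) this
  have hker : IsZero (l.obj (kernel η)) := isZero_of_mono_eq_zero _ hzero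
  have h0 : kernel.ι η = 0 := hX _ hker _
  refine Preadditive.mono_of_cancel_zero _ (fun g hg => ?_)
  rw [← kernel.lift_ι η g hg, h0, comp_zero]

lemma hz_D (adj : l ⊣ i) (p : TorsionPair C) :
    ∀ ⦃X Y : D⦄, X ∈ preimageSet l p.torsion →
      Y ∈ preimageSet l p.torsionFree ∩ rightPerp (kerSet l) → ∀ f : X ⟶ Y, f = 0 := by
  have := adj.isLeftAdjoint
  intro X Y hX hY f
  have hmono : Mono (adj.unit.app Y) := unit_mono_of_mem_rightPerp l i adj Y hY.2
  have hnat : f ≫ adj.unit.app Y = adj.unit.app X ≫ i.map (l.map f) := by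
    simpa using adj.unit.naturality f
  have h0 : l.map f = 0 := p.hom_eq_zero hX hY.1 (l.map f)
  rw [← cancel_mono (adj.unit.app Y), hnat, h0, i.map_zero, comp_zero, zero_comp]

lemma exists_ses_D (adj : l ⊣ i) (p : TorsionPair C) (A : D) :
    ∃ (X Y : D) (f : X ⟶ A) (g : A ⟶ Y) (w : f ≫ g = 0),
      X ∈ preimageSet l p.torsion ∧
      Y ∈ preimageSet l p.torsionFree ∩ rightPerp (kerSet l) ∧
      (ShortComplex.mk f g w).ShortExact := by
  have := adj.isLeftAdjoint
  obtain ⟨T, F, a, b, w, hT, hF, hse⟩ := p.exists_ses (l.obj A)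
  haveI : Mono a := hse.mono_f
  haveI : Epi b := hse.epi_g
  set φ : A ⟶ i.obj F := adj.homEquiv A F b with hφdef
  have hcounit : l.map φ ≫ adj.counit.app F = b := by
    have h1 : (adj.homEquiv A F).symm φ = b := (adj.homEquiv A F).symm_apply_apply b
    rw [Adjunction.homEquiv_counit] at h1
    exact h1
  have hφeq : l.map φ = b ≫ inv (adj.counit.app F) := by
    rw [← hcounit]
    simp
  set f : kernel φ ⟶ A := kernel.ι φ with hfdef
  set g : A ⟶ Abelian.image φ := Abelian.factorThruImage φ with hgdef
  have hfg : f ≫ g = 0 := by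
    rw [← cancel_mono (Abelian.image.ι φ), Category.assoc, Abelian.image.fac,
      kernel.condition, zero_comp]
  -- the short complex in D and its exactness
  have kfg : IsLimit (KernelFork.ofι f hfg) := by
    refine KernelFork.IsLimit.ofι' f hfg (fun {W} k hk => ?_)
    have hkφ : k ≫ φ = 0 := by
      rw [← Abelian.image.fac φ, ← Category.assoc, hk, zero_comp]
    exact ⟨kernel.lift φ k hkφ, kernel.lift_ι φ k hkφ⟩
  have hSE : (ShortComplex.mk f g hfg).ShortExact :=
    { exact := ShortComplex.exact_of_f_is_kernel _ kfg }
  have hSE' : ((ShortComplex.mk f g hfg).map l).ShortExact := hSE.map_of_exact l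
  -- l.map f is a kernel of b
  haveI : Mono (l.map f) := hSE'.mono_f
  haveI : Epi (l.map g) := hSE'.epi_g
  haveI := hSE'.mono_f
  haveI := hSE'.epi_g
  have hlf_b : l.map f ≫ b = 0 := by
    rw [← hcounit, ← Category.assoc, ← l.map_comp, kernel.condition, l.map_zero, zero_comp]
  have k2 : IsLimit (KernelFork.ofι (l.map f) hlf_b) := by
    refine KernelFork.IsLimit.ofι' _ _ (fun {W} k hk => ?_)
    have himono : Mono (l.map (Abelian.image.ι φ)) :=
      preserves_mono_of_preservesLimit l _
    have hk2 : k ≫ l.map g = 0 := by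
      rw [← cancel_mono (l.map (Abelian.image.ι φ)), Category.assoc, ← l.map_comp,
        Abelian.image.fac, zero_comp, hφeq, ← Category.assoc, hk, zero_comp]
    exact ⟨hSE'.exact.lift k hk2, hSE'.exact.lift_f k hk2⟩
  -- the iso between l.obj (kernel φ) and T
  let j : l.obj (kernel φ) ≅ T := IsLimit.conePointUniqueUpToIso k2 hse.fIsKernel
  have hj : j.hom ≫ a = l.map f := by
    simpa using IsLimit.conePointUniqueUpToIso_hom_comp k2 hse.fIsKernel
      WalkingParallelPair.zero
  -- b is a cokernel of l.map f
  have c2 : IsColimit (CokernelCofork.ofπ b hlf_b) := by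
    refine CokernelCofork.IsColimit.ofπ' _ _ (fun {W} k hk => ?_)
    have ha : a ≫ k = 0 := by
      have haeq : a = j.inv ≫ l.map f := by rw [← hj, Iso.inv_hom_id_assoc]
      rw [haeq, Category.assoc, hk, comp_zero]
    exact CokernelCofork.IsColimit.desc' hse.gIsCokernel k ha
  -- the iso between l.obj (Abelian.image φ) and F
  let e2 : l.obj (Abelian.image φ) ≅ F :=
    IsColimit.coconePointUniqueUpToIso hSE'.gIsCokernel c2
  refine ⟨kernel φ, Abelian.image φ, f, g, hfg, ?_, ⟨?_, ?_⟩, hSE⟩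
  · exact p.torsion_iso_closed j.symm hT
  · exact p.torsionFree_iso_closed e2.symm hF
  · exact mem_rightPerp_of_mono (Abelian.image.ι φ) (i_obj_mem_rightPerp l i adj F)

lemma imageSet_iso_closed {P : Set D} {X Y : C} (e : X ≅ Y)
    (hX : X ∈ imageSet l P) : Y ∈ imageSet l P := by
  obtain ⟨Z, hZ, ⟨e'⟩⟩ := hX
  exact ⟨Z, hZ, ⟨e'.trans e⟩⟩

lemma hz_C (adj : l ⊣ i) (q : TorsionPair D)
    (hq1 : ∀ Y ∈ q.torsionFree, i.obj (l.obj Y) ∈ q.torsionFree) :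
    ∀ ⦃X' Y' : C⦄, X' ∈ imageSet l q.torsion → Y' ∈ imageSet l q.torsionFree →
      ∀ f : X' ⟶ Y', f = 0 := by
  have := adj.isLeftAdjoint
  intro X' Y' hX' hY' f
  obtain ⟨X, hX, ⟨eX⟩⟩ := hX'
  obtain ⟨Y, hY, ⟨eY⟩⟩ := hY'
  have hu : eX.hom ≫ f ≫ eY.inv = 0 := by
    have hv : adj.homEquiv X (l.obj Y) (eX.hom ≫ f ≫ eY.inv) = 0 :=
      q.hom_eq_zero hX (hq1 Y hY) _
    have := congrArg (adj.homEquiv X (l.obj Y)).symm hv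
    rw [Equiv.symm_apply_apply] at this
    rw [this, Adjunction.homEquiv_counit, l.map_zero, zero_comp]
  calc f = eX.inv ≫ (eX.hom ≫ f ≫ eY.inv) ≫ eY.hom := by simp
  _ = 0 := by rw [hu, zero_comp, comp_zero]

lemma exists_ses_C (adj : l ⊣ i) (q : TorsionPair D) (A : C) :
    ∃ (X' Y' : C) (f : X' ⟶ A) (g : A ⟶ Y') (w : f ≫ g = 0),
      X' ∈ imageSet l q.torsion ∧ Y' ∈ imageSet l q.torsionFree ∧
      (ShortComplex.mk f g w).ShortExact := by
  have := adj.isLeftAdjoint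
  obtain ⟨X, Y, f, g, w, hX, hY, hse⟩ := q.exists_ses (i.obj A)
  have hse' : ((ShortComplex.mk f g w).map l).ShortExact := hse.map_of_exact l
  have e : ((ShortComplex.mk f g w).map l).X₂ ≅ A := (asIso (adj.counit.app A) : l.obj (i.obj A) ≅ A)
  have hse'' := shortExact_congr_mid hse' e
  exact ⟨l.obj X, l.obj Y, l.map f ≫ e.hom, e.inv ≫ l.map g, _,
    ⟨X, hX, ⟨Iso.refl _⟩⟩, ⟨Y, hY, ⟨Iso.refl _⟩⟩, hse''⟩

lemma preimage_image_torsion (adj : l ⊣ i) (q : TorsionPair D)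
    (hq1 : ∀ Y ∈ q.torsionFree, i.obj (l.obj Y) ∈ q.torsionFree)
    (hq2 : q.torsionFree ⊆ rightPerp (kerSet l)) :
    preimageSet l (imageSet l q.torsion) = q.torsion := by
  have := adj.isLeftAdjoint
  ext A
  constructor
  · rintro ⟨X, hX, ⟨e⟩⟩
    obtain ⟨T', F', f', g', w', hT', hF', hse'⟩ := q.exists_ses A
    have hmse : ((ShortComplex.mk f' g' w').map l).ShortExact := hse'.map_of_exact l
    haveI : Epi (l.map g') := hmse.epi_g
    -- any map l.obj X ⟶ l.obj F' vanishes
    have hu : e.hom ≫ l.map g' = 0 := by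
      have hv : adj.homEquiv X (l.obj F') (e.hom ≫ l.map g') = 0 :=
        q.hom_eq_zero hX (hq1 F' hF') _
      have := congrArg (adj.homEquiv X (l.obj F')).symm hv
      rw [Equiv.symm_apply_apply] at this
      rw [this, Adjunction.homEquiv_counit, l.map_zero, zero_comp]
    have hg0 : l.map g' = 0 := by
      calc l.map g' = e.inv ≫ (e.hom ≫ l.map g') := by simp
      _ = 0 := by rw [hu, comp_zero]
    have hzF : IsZero (l.obj F') := isZero_of_epi_eq_zero (l.map g') hg0
    have hF0 : IsZero F' := by
      rw [IsZero.iff_id_eq_zero]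
      exact hq2 hF' F' hzF (𝟙 F')
    have : IsIso f' := isIso_f_of_isZero_X₃ hse' hF0
    exact q.torsion_iso_closed (asIso f') hT'
  · intro hA
    exact ⟨A, hA, ⟨Iso.refl _⟩⟩

lemma preimage_image_torsionFree (adj : l ⊣ i) (q : TorsionPair D)
    (hq1 : ∀ Y ∈ q.torsionFree, i.obj (l.obj Y) ∈ q.torsionFree)
    (hq2 : q.torsionFree ⊆ rightPerp (kerSet l)) :
    preimageSet l (imageSet l q.torsionFree) ∩ rightPerp (kerSet l) = q.torsionFree := by
  have := adj.isLeftAdjoint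
  ext A
  constructor
  · rintro ⟨⟨Y, hY, ⟨e⟩⟩, hA2⟩
    have hilA : i.obj (l.obj A) ∈ q.torsionFree :=
      q.torsionFree_iso_closed (i.mapIso e) (hq1 Y hY)
    haveI hmono : Mono (adj.unit.app A) := unit_mono_of_mem_rightPerp l i adj A hA2
    obtain ⟨T', F', f', g', w', hT', hF', hse'⟩ := q.exists_ses A
    haveI := hse'.mono_f
    have hf0 : f' = 0 := by
      have : f' ≫ adj.unit.app A = 0 := q.hom_eq_zero hT' hilA _
      exact zero_of_comp_mono _ this
    have hzT : IsZero T' := isZero_of_mono_eq_zero f' hf0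
    have : IsIso g' := isIso_g_of_isZero_X₁ hse' hzT
    exact q.torsionFree_iso_closed (asIso g').symm hF'
  · intro hA
    exact ⟨⟨A, hA, ⟨Iso.refl _⟩⟩, hq2 hA⟩

lemma image_preimage (adj : l ⊣ i) (P : Set C)
    (hP : ∀ {X Y : C}, (X ≅ Y) → X ∈ P → Y ∈ P) :
    imageSet l (preimageSet l P) = P := by
  ext Z
  constructor
  · rintro ⟨X, hX, ⟨e⟩⟩
    exact hP e hX
  · intro hZ
    refine ⟨i.obj Z, ?_, ⟨asIso (adj.counit.app Z)⟩⟩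
    exact hP (asIso (adj.counit.app Z)).symm hZ

lemma image_preimage_inter (adj : l ⊣ i) (P : Set C)
    (hP : ∀ {X Y : C}, (X ≅ Y) → X ∈ P → Y ∈ P) :
    imageSet l (preimageSet l P ∩ rightPerp (kerSet l)) = P := by
  ext Z
  constructor
  · rintro ⟨X, ⟨hX, _⟩, ⟨e⟩⟩
    exact hP e hX
  · intro hZ
    refine ⟨i.obj Z, ⟨?_, i_obj_mem_rightPerp l i adj Z⟩, ⟨asIso (adj.counit.app Z)⟩⟩
    exact hP (asIso (adj.counit.app Z)).symm hZ

end Giraud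

/-- **Theorem.** Let `(D, C, l, i)` be a distinguished Giraud subcategory.  There is a
one-to-one correspondence between torsion pairs `(X, Y)` on `D` with `il(Y) ⊆ Y ⊆ S^⊥`
(where `S = Ker l`) and torsion pairs `(T, F)` on `C`, given by `(X, Y) ↦ (l(X), l(Y))`
and `(T, F) ↦ (T̂, F̂)`. -/
theorem giraud_torsionPair_correspondence
    {D : Type u} [Category.{v} D] [Abelian D]
    {C : Type u} [Category.{v} C] [Abelian C]
    (l : D ⥤ C) (i : C ⥤ D) (adj : l ⊣ i)
    [PreservesFiniteLimits l] [PreservesFiniteColimits l] [i.Full] [i.Faithful] :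
    ∃ e : {q : TorsionPair D //
        (∀ Y ∈ q.torsionFree, i.obj (l.obj Y) ∈ q.torsionFree) ∧
        q.torsionFree ⊆ rightPerp (kerSet l)} ≃ TorsionPair C,
      (∀ q, (e q).torsion = imageSet l q.1.torsion ∧
            (e q).torsionFree = imageSet l q.1.torsionFree) ∧
      (∀ p, (e.symm p).1.torsion = preimageSet l p.torsion ∧
            (e.symm p).1.torsionFree =
              preimageSet l p.torsionFree ∩ rightPerp (kerSet l)) := by
  classical
  have := adj.isLeftAdjoint
  -- the backward map: from torsion pairs on `C` to torsion pairs on `D`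
  let gmap : TorsionPair C → {q : TorsionPair D //
      (∀ Y ∈ q.torsionFree, i.obj (l.obj Y) ∈ q.torsionFree) ∧
      q.torsionFree ⊆ rightPerp (kerSet l)} := fun p =>
    ⟨torsionPairMk' (preimageSet l p.torsion)
        (preimageSet l p.torsionFree ∩ rightPerp (kerSet l))
        (fun e hX => p.torsion_iso_closed (l.mapIso e) hX)
        (fun {X Y} e hX => ⟨p.torsionFree_iso_closed (l.mapIso e) hX.1,
          fun Z hZ f => by
            have h0 : f ≫ e.inv = 0 := hX.2 Z hZ (f ≫ e.inv)
            calc f = (f ≫ e.inv) ≫ e.hom := by simp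
            _ = 0 := by rw [h0, zero_comp]⟩)
        (hz_D l i adj p) (exists_ses_D l i adj p),
     fun Y hY => ⟨p.torsionFree_iso_closed
         (asIso (adj.counit.app (l.obj Y))).symm hY.1,
       i_obj_mem_rightPerp l i adj _⟩,
     fun Y hY => hY.2⟩
  have hinj : Function.Injective gmap := by
    intro p p' h
    have h1 : preimageSet l p.torsion = preimageSet l p'.torsion :=
      congrArg (fun s => s.1.torsion) h
    have h2 : preimageSet l p.torsionFree ∩ rightPerp (kerSet l) =
        preimageSet l p'.torsionFree ∩ rightPerp (kerSet l) :=
      congrArg (fun s => s.1.torsionFree) h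
    refine TorsionPair.ext' ?_ ?_
    · rw [← image_preimage l i adj p.torsion (fun e h => p.torsion_iso_closed e h),
        ← image_preimage l i adj p'.torsion (fun e h => p'.torsion_iso_closed e h), h1]
    · rw [← image_preimage_inter l i adj p.torsionFree
          (fun e h => p.torsionFree_iso_closed e h),
        ← image_preimage_inter l i adj p'.torsionFree
          (fun e h => p'.torsionFree_iso_closed e h), h2]
  have hsurj : Function.Surjective gmap := by
    rintro ⟨q, hq1, hq2⟩
    refine ⟨torsionPairMk' (imageSet l q.torsion) (imageSet l q.torsionFree)
      (fun e hX => imageSet_iso_closed l e hX) (fun e hX => imageSet_iso_closed l e hX)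
      (hz_C l i adj q hq1) (exists_ses_C l i adj q), ?_⟩
    apply Subtype.ext
    refine TorsionPair.ext' ?_ ?_
    · exact preimage_image_torsion l i adj q hq1 hq2
    · exact preimage_image_torsionFree l i adj q hq1 hq2
  refine ⟨(Equiv.ofBijective gmap ⟨hinj, hsurj⟩).symm, fun q => ?_, fun p => ⟨rfl, rfl⟩⟩
  have hgq : gmap ((Equiv.ofBijective gmap ⟨hinj, hsurj⟩).symm q) = q :=
    (Equiv.ofBijective gmap ⟨hinj, hsurj⟩).apply_symm_apply q
  set p := (Equiv.ofBijective gmap ⟨hinj, hsurj⟩).symm q with hp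
  have h1 : preimageSet l p.torsion = q.1.torsion :=
    congrArg (fun s => s.1.torsion) hgq
  have h2 : preimageSet l p.torsionFree ∩ rightPerp (kerSet l) = q.1.torsionFree :=
    congrArg (fun s => s.1.torsionFree) hgq
  constructor
  · rw [← h1]
    exact (image_preimage l i adj _ (fun e h => p.torsion_iso_closed e h)).symm
  · rw [← h2]
    exact (image_preimage_inter l i adj _
      (fun e h => p.torsionFree_iso_closed e h)).symm


end TiltedGiraudPaper
end

section
/- Let D be an abelian category with a distinguished co-Giraud subcategory (D, C, j, r), and let F be a torsion-free class in C. Then the class r^←(F) := { D ∈ D | r(D) ∈ F } is a torsion-free class on D. -/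
open CategoryTheory Limits CategoryTheory.Pretriangulated

universe w'' w' w v'' u'' v' u' v u

namespace TiltedGiraudPaper

/-- **Corollary.** Let `(D, C, j, r)` be a distinguished co-Giraud subcategory and `F` a
torsion-free class in `C`.  Then `r^←(F) = {X | r(X) ∈ F}` is a torsion-free class on `D`. -/
theorem preimage_torsionFree_of_coGiraud
    {D : Type u} [Category.{v} D] [Abelian D]
    {C : Type u} [Category.{v} C] [Abelian C]
    (j : C ⥤ D) (r : D ⥤ C) (adj : j ⊣ r)
    [PreservesFiniteLimits r] [PreservesFiniteColimits r] [j.Full] [j.Faithful]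
    (F : Set C) (hF : IsTorsionFreeClass C F) :
    IsTorsionFreeClass D (preimageSet r F) := by
  obtain ⟨hlim, hext⟩ := hF
  have : PreservesLimitsOfSize.{v, v} r := adj.rightAdjoint_preservesLimits
  constructor
  · intro J _ G c hc hmem
    exact hlim (r.mapCone c) (isLimitOfPreserves r hc) (fun k => hmem k)
  · intro S hS h1 h3
    have : r.IsRightAdjoint := ⟨j, ⟨adj⟩⟩
    exact hext (S.map r) (hS.map_of_exact r) h1 h3

end TiltedGiraudPaper
end

section
/- Let D be an abelian category with a distinguished co-Giraud subcategory (D, C, j, r), and let (T, F) be a torsion pair on C. Then the classes T̂ := { X ∈ D | X ∈ ^⊥S and r(X) ∈ T } and F̂ := { Y ∈ D | r(Y) ∈ F } form a torsion pair (T̂, F̂) on D which moreover satisfies j(T) ⊆ T̂, j(F) ⊆ F̂, r(T̂) = T and r(F̂) = F. -/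
open CategoryTheory Limits CategoryTheory.Pretriangulated

universe w'' w' w v'' u'' v' u' v u

namespace TiltedGiraudPaper

section LiftAux

open CategoryTheory.Limits

/-- Colimit-closed classes are closed under isomorphism. -/
lemma closedUnderColimits_iso {E : Type u'} [Category.{v'} E] {P : Set E}
    (h : ClosedUnderColimits E P) {A B : E} (e : A ≅ B) (hA : A ∈ P) : B ∈ P := by
  let F : Discrete PUnit.{v' + 1} ⥤ E := (Functor.const _).obj A
  let c : Cocone F := { pt := B, ι := { app := fun _ => e.hom } }
  have hc : IsColimit c :=
    { desc := fun s => e.inv ≫ s.ι.app ⟨PUnit.unit⟩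
      fac := fun s j => by
        obtain ⟨⟨⟩⟩ := j
        simp [c]
      uniq := fun s m hm => by
        rw [← hm ⟨PUnit.unit⟩]
        simp [c] }
  exact h c hc (fun _ => hA)

/-- Limit-closed classes are closed under isomorphism. -/
lemma closedUnderLimits_iso {E : Type u'} [Category.{v'} E] {P : Set E}
    (h : ClosedUnderLimits E P) {A B : E} (e : A ≅ B) (hA : A ∈ P) : B ∈ P := by
  let F : Discrete PUnit.{v' + 1} ⥤ E := (Functor.const _).obj A
  let c : Cone F := { pt := B, π := { app := fun _ => e.inv } }
  have hc : IsLimit c :=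
    { lift := fun s => s.π.app ⟨PUnit.unit⟩ ≫ e.hom
      fac := fun s j => by
        obtain ⟨⟨⟩⟩ := j
        simp [c]
      uniq := fun s m hm => by
        rw [← hm ⟨PUnit.unit⟩]
        simp [c] }
  exact h c hc (fun _ => hA)

variable {D : Type u} [Category.{v} D] [Abelian D]
  {C : Type u} [Category.{v} C] [Abelian C]

lemma jobj_mem_leftPerp (j : C ⥤ D) (r : D ⥤ C) (adj : j ⊣ r) (X : C) : j.obj X ∈ leftPerp (kerSet r) := fun S hS f =>
  (adj.homEquiv X S).injective (hS.eq_of_tgt _ _)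

lemma isIso_r_map_counit (j : C ⥤ D) (r : D ⥤ C) (adj : j ⊣ r)
    [PreservesFiniteLimits r] [PreservesFiniteColimits r] [j.Full] [j.Faithful] (A : D) : IsIso (r.map (adj.counit.app A)) := by
  have h := IsIso.inv_eq_of_hom_inv_id (adj.right_triangle_components A)
  rw [← h]
  infer_instance

lemma epi_counit_of_mem (j : C ⥤ D) (r : D ⥤ C) (adj : j ⊣ r)
    [PreservesFiniteLimits r] [PreservesFiniteColimits r] [j.Full] [j.Faithful] {A : D} (hA : A ∈ leftPerp (kerSet r)) :
    Epi (adj.counit.app A) := by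
  haveI := isIso_r_map_counit j r adj A
  have h1 : r.map (cokernel.π (adj.counit.app A)) = 0 := by
    rw [← cancel_epi (r.map (adj.counit.app A)), ← r.map_comp, cokernel.condition,
      r.map_zero, comp_zero]
  haveI : Epi (r.map (cokernel.π (adj.counit.app A))) :=
    preserves_epi_of_preservesColimit r _
  have h2 : IsZero (r.obj (cokernel (adj.counit.app A))) :=
    IsZero.of_epi_eq_zero _ h1
  exact Abelian.epi_of_cokernel_π_eq_zero _ (hA _ h2 _)

lemma hom_vanish (j : C ⥤ D) (r : D ⥤ C) (adj : j ⊣ r)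
    [PreservesFiniteLimits r] [PreservesFiniteColimits r] [j.Full] [j.Faithful]
    (p : TorsionPair C) {X Y : D}
    (hX1 : r.obj X ∈ p.torsion) (hX2 : X ∈ leftPerp (kerSet r))
    (hY : r.obj Y ∈ p.torsionFree) (f : X ⟶ Y) : f = 0 := by
  haveI := epi_counit_of_mem j r adj hX2
  rw [← cancel_epi (adj.counit.app X), comp_zero]
  apply (adj.homEquiv _ _).injective
  have h : adj.homEquiv _ _ (adj.counit.app X ≫ f) = r.map f := by
    rw [Adjunction.homEquiv_unit, r.map_comp, adj.right_triangle_components_assoc]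
  rw [h, p.hom_eq_zero hX1 hY (r.map f), Adjunction.homEquiv_unit, r.map_zero, comp_zero]

lemma exists_ses_lift (j : C ⥤ D) (r : D ⥤ C) (adj : j ⊣ r)
    [PreservesFiniteLimits r] [PreservesFiniteColimits r] [j.Full] [j.Faithful]
    (p : TorsionPair C) (A : D) :
    ∃ (T' G : D) (m : T' ⟶ A) (g : A ⟶ G) (w : m ≫ g = 0),
      ((r.obj T' ∈ p.torsion) ∧ T' ∈ leftPerp (kerSet r)) ∧ (r.obj G ∈ p.torsionFree) ∧
      (ShortComplex.mk m g w).ShortExact := by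
  obtain ⟨T₀, F₀, t, u, w, hT, hF, hses⟩ := p.exists_ses (r.obj A)
  haveI : Mono t := hses.mono_f
  haveI : Epi u := hses.epi_g
  haveI := isIso_r_map_counit j r adj A
  set φ : j.obj T₀ ⟶ A := j.map t ≫ adj.counit.app A with hφ
  have hrφ : adj.unit.app T₀ ≫ r.map φ = t := by
    rw [hφ, r.map_comp, ← Category.assoc, adj.unit_naturality t, Category.assoc,
      adj.right_triangle_components, Category.comp_id]
  have hrφ' : r.map φ = inv (adj.unit.app T₀) ≫ t := by
    rw [IsIso.eq_inv_comp]; exact hrφ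
  have hmono_rφ : Mono (r.map φ) := by
    rw [hrφ']; exact mono_comp _ _
  set e := Abelian.factorThruImage φ with he
  set m := Abelian.image.ι φ with hm
  have hfac : e ≫ m = φ := Abelian.image.fac φ
  haveI : Epi (r.map e) := preserves_epi_of_preservesColimit r e
  haveI : Mono (r.map e) := by
    have h : Mono (r.map e ≫ r.map m) := by rw [← r.map_comp, hfac]; exact hmono_rφ
    exact mono_of_mono (r.map e) (r.map m)
  haveI : IsIso (r.map e) := isIso_of_mono_of_epi _
  set g := cokernel.π m with hg
  have hw : m ≫ g = 0 := cokernel.condition m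
  have hse : (ShortComplex.mk m g hw).ShortExact := by
    refine ShortComplex.ShortExact.mk' ?_ inferInstance inferInstance
    exact ShortComplex.exact_of_f_is_kernel _
      (Abelian.monoIsKernelOfCokernel (CokernelCofork.ofπ (cokernel.π m) (cokernel.condition m))
        (cokernelIsCokernel m))
  have hperp : Abelian.image φ ∈ leftPerp (kerSet r) := by
    intro S hS f
    have h1 : e ≫ f = 0 := jobj_mem_leftPerp j r adj T₀ S hS (e ≫ f)
    rwa [← cancel_epi e, comp_zero]
  have hrT : r.obj (Abelian.image φ) ∈ p.torsion := by
    refine closedUnderColimits_iso p.isTorsionClass.1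
      ((asIso (adj.unit.app T₀)) ≪≫ asIso (r.map e)) hT
  have hrG : r.obj (cokernel m) ∈ p.torsionFree := by
    have hseC := hse.map_of_exact r
    have h1 : IsColimit
        (CokernelCofork.ofπ (((ShortComplex.mk m g hw).map r).g)
          (((ShortComplex.mk m g hw).map r).zero)) := hseC.gIsCokernel
    have iso1 : r.obj (cokernel m) ≅ cokernel (r.map m) :=
      IsColimit.coconePointUniqueUpToIso h1 (colimit.isColimit (parallelPair (r.map m) 0))
    have heq : r.map φ = r.map e ≫ r.map m := by rw [← r.map_comp, hfac]
    have iso2 : cokernel (r.map m) ≅ cokernel (r.map φ) :=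
      (cokernelEpiComp (r.map e) (r.map m)).symm ≪≫ (cokernelIsoOfEq heq).symm
    have iso3 : cokernel (r.map φ) ≅ cokernel t :=
      cokernelIsoOfEq hrφ' ≪≫ cokernelEpiComp (inv (adj.unit.app T₀)) t
    have iso4 : cokernel t ≅ F₀ :=
      IsColimit.coconePointUniqueUpToIso (cokernelIsCokernel t) hses.gIsCokernel
    exact closedUnderLimits_iso p.isTorsionFreeClass.1
      (iso1 ≪≫ iso2 ≪≫ iso3 ≪≫ iso4).symm hF
  exact ⟨_, _, m, g, hw, ⟨hrT, hperp⟩, hrG, hse⟩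

end LiftAux

/-- **Proposition.** Let `(D, C, j, r)` be a distinguished co-Giraud subcategory and
`(T, F)` a torsion pair on `C`.  Then `T̂ = r^←(T) ∩ ^⊥(Ker r)` and `F̂ = r^←(F)` form a
torsion pair on `D` with `j(T) ⊆ T̂`, `j(F) ⊆ F̂`, `r(T̂) = T` and `r(F̂) = F`. -/
theorem torsionPair_lift_along_coGiraud
    {D : Type u} [Category.{v} D] [Abelian D]
    {C : Type u} [Category.{v} C] [Abelian C]
    (j : C ⥤ D) (r : D ⥤ C) (adj : j ⊣ r)
    [PreservesFiniteLimits r] [PreservesFiniteColimits r] [j.Full] [j.Faithful]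
    (p : TorsionPair C) :
    ∃ q : TorsionPair D,
      q.torsion = preimageSet r p.torsion ∩ leftPerp (kerSet r) ∧
      q.torsionFree = preimageSet r p.torsionFree ∧
      (∀ T ∈ p.torsion, j.obj T ∈ q.torsion) ∧
      (∀ F ∈ p.torsionFree, j.obj F ∈ q.torsionFree) ∧
      imageSet r q.torsion = p.torsion ∧
      imageSet r q.torsionFree = p.torsionFree := by
  set Th : Set D := preimageSet r p.torsion ∩ leftPerp (kerSet r) with hTh
  set Fh : Set D := preimageSet r p.torsionFree with hFh
  have hvanish : ∀ ⦃X Y : D⦄, X ∈ Th → Y ∈ Fh → ∀ f : X ⟶ Y, f = 0 :=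
    fun X Y hX hY f => hom_vanish j r adj p hX.1 hX.2 hY f
  have hThIso : ∀ {A B : D}, (A ≅ B) → A ∈ Th → B ∈ Th := by
    intro A B e hA
    refine ⟨closedUnderColimits_iso p.isTorsionClass.1 (r.mapIso e) hA.1, ?_⟩
    intro S hS f
    have h := hA.2 S hS (e.hom ≫ f)
    calc f = e.inv ≫ e.hom ≫ f := by simp
    _ = 0 := by rw [h, comp_zero]
  have hFhIso : ∀ {A B : D}, (A ≅ B) → A ∈ Fh → B ∈ Fh := fun e hA =>
    closedUnderLimits_iso p.isTorsionFreeClass.1 (r.mapIso e) hA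
  have hTiff : ∀ X : D, X ∈ Th ↔ ∀ Y ∈ Fh, ∀ f : X ⟶ Y, f = 0 := by
    intro X
    constructor
    · intro hX Y hY f; exact hvanish hX hY f
    · intro h
      obtain ⟨T', G, m, g, w, hT', hG, hse⟩ := exists_ses_lift j r adj p X
      haveI := hse.mono_f
      have hg0 : g = 0 := h G hG g
      haveI : Epi m := hse.exact.epi_f hg0
      haveI : IsIso m := isIso_of_mono_of_epi m
      exact hThIso (asIso m) hT'
  have hFiff : ∀ Y : D, Y ∈ Fh ↔ ∀ X ∈ Th, ∀ f : X ⟶ Y, f = 0 := by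
    intro Y
    constructor
    · intro hY X hX f; exact hvanish hX hY f
    · intro h
      obtain ⟨T', G, m, g, w, hT', hG, hse⟩ := exists_ses_lift j r adj p Y
      haveI := hse.epi_g
      have hm0 : m = 0 := h T' hT' m
      haveI : Mono g := hse.exact.mono_g hm0
      haveI : IsIso g := isIso_of_mono_of_epi g
      exact hFhIso (asIso g).symm hG
  refine ⟨⟨Th, Fh, ⟨?_, ?_⟩, ⟨?_, ?_⟩, hvanish, fun A => exists_ses_lift j r adj p A⟩,
    rfl, rfl, ?_, ?_, ?_, ?_⟩
  · -- torsion closed under colimits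
    intro J _ F c hc hmem
    refine (hTiff _).mpr ?_
    intro Y hY f
    apply hc.hom_ext
    intro i
    rw [comp_zero]
    exact (hTiff _).mp (hmem i) Y hY _
  · -- torsion closed under extensions
    intro S hS h1 h3
    refine (hTiff _).mpr ?_
    intro Y hY f
    have hf1 : S.f ≫ f = 0 := (hTiff _).mp h1 Y hY _
    obtain ⟨d, hd⟩ := CokernelCofork.IsColimit.desc' hS.gIsCokernel f hf1
    rw [← hd, (hTiff _).mp h3 Y hY d, comp_zero]
  · -- torsionFree closed under limits
    intro J _ F c hc hmem
    refine (hFiff _).mpr ?_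
    intro X hX f
    apply hc.hom_ext
    intro i
    rw [zero_comp]
    exact (hFiff _).mp (hmem i) X hX _
  · -- torsionFree closed under extensions
    intro S hS h1 h3
    refine (hFiff _).mpr ?_
    intro X hX f
    have hf3 : f ≫ S.g = 0 := (hFiff _).mp h3 X hX _
    obtain ⟨l, hl⟩ := KernelFork.IsLimit.lift' hS.fIsKernel f hf3
    rw [← hl, (hFiff _).mp h1 X hX l, zero_comp]
  · -- j(T) ⊆ torsion
    intro T hT
    exact ⟨closedUnderColimits_iso p.isTorsionClass.1 (asIso (adj.unit.app T)) hT,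
      jobj_mem_leftPerp j r adj T⟩
  · -- j(F) ⊆ torsionFree
    intro F hF
    exact closedUnderLimits_iso p.isTorsionFreeClass.1 (asIso (adj.unit.app F)) hF
  · -- imageSet torsion
    ext Y
    constructor
    · rintro ⟨X, hX, ⟨e⟩⟩
      exact closedUnderColimits_iso p.isTorsionClass.1 e hX.1
    · intro hY
      exact ⟨j.obj Y,
        ⟨closedUnderColimits_iso p.isTorsionClass.1 (asIso (adj.unit.app Y)) hY,
          jobj_mem_leftPerp j r adj Y⟩, ⟨(asIso (adj.unit.app Y)).symm⟩⟩
  · -- imageSet torsionFree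
    ext Y
    constructor
    · rintro ⟨X, hX, ⟨e⟩⟩
      exact closedUnderLimits_iso p.isTorsionFreeClass.1 e hX
    · intro hY
      exact ⟨j.obj Y,
        closedUnderLimits_iso p.isTorsionFreeClass.1 (asIso (adj.unit.app Y)) hY,
        ⟨(asIso (adj.unit.app Y)).symm⟩⟩


end TiltedGiraudPaper
end

section
/- Let D be an abelian category with a distinguished co-Giraud subcategory (D, C, j, r). Then the assignments (T, F) ↦ (T̂, F̂) and (X, Y) ↦ (r(X), r(Y)) give a one-to-one correspondence between torsion pairs (X, Y) on D satisfying jr(X) ⊆ X ⊆ ^⊥S and torsion pairs (T, F) on C. -/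
open CategoryTheory Limits CategoryTheory.Pretriangulated

universe w'' w' w v'' u'' v' u' v u

namespace TiltedGiraudPaper

section AuxGeneral

variable {C : Type u} [Category.{v} C]

lemma memOfIsoColimits {P : Set C} (h : ClosedUnderColimits C P)
    {X Y : C} (e : X ≅ Y) (hX : X ∈ P) : Y ∈ P := by
  let F : Discrete PUnit.{v + 1} ⥤ C := (Functor.const _).obj X
  have hobj : ∀ jj : Discrete PUnit.{v + 1}, F.obj jj ∈ P := fun _ => hX
  refine h (F := F) ⟨Y, ⟨fun _ => e.hom, by rintro ⟨⟨⟩⟩ ⟨⟨⟩⟩ f; simp [F]⟩⟩ ?_ hobj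
  exact
    { desc := fun s => e.inv ≫ s.ι.app ⟨PUnit.unit⟩
      fac := by rintro s ⟨⟨⟩⟩; simp
      uniq := by
        rintro s m hm
        have := hm ⟨PUnit.unit⟩
        simp only at this
        dsimp only
        rw [← this]; simp }

lemma memOfIsoLimits {P : Set C} (h : ClosedUnderLimits C P)
    {X Y : C} (e : X ≅ Y) (hX : X ∈ P) : Y ∈ P := by
  let F : Discrete PUnit.{v + 1} ⥤ C := (Functor.const _).obj X
  have hobj : ∀ jj : Discrete PUnit.{v + 1}, F.obj jj ∈ P := fun _ => hX
  refine h (F := F) ⟨Y, ⟨fun _ => e.inv, by rintro ⟨⟨⟩⟩ ⟨⟨⟩⟩ f; simp [F]⟩⟩ ?_ hobj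
  exact
    { lift := fun s => s.π.app ⟨PUnit.unit⟩ ≫ e.hom
      fac := by rintro s ⟨⟨⟩⟩; simp
      uniq := by
        rintro s m hm
        have := hm ⟨PUnit.unit⟩
        simp only at this
        dsimp only
        rw [← this]; simp }

lemma memOfIsZeroLimits {P : Set C} (h : ClosedUnderLimits C P)
    {X : C} (hX : IsZero X) : X ∈ P := by
  let F : Discrete PEmpty.{v + 1} ⥤ C := Functor.empty C
  refine h (F := F) ⟨X, ⟨fun jj => jj.as.elim, by rintro ⟨⟨⟩⟩⟩⟩ ?_ (fun jj => jj.as.elim)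
  exact
    { lift := fun s => hX.from_ s.pt
      fac := by rintro s ⟨⟨⟩⟩
      uniq := fun s m _ => hX.eq_of_tgt _ _ }

variable [Abelian C]

lemma isTorsionClass_leftPerp (P : Set C) : IsTorsionClass C (leftPerp P) := by
  constructor
  · intro J _ F c hc hmem W hW f
    refine hc.hom_ext (fun jj => ?_)
    rw [comp_zero]
    exact hmem jj W hW _
  · intro S hS h1 h3 W hW f
    have := hS.epi_g
    have hf : S.f ≫ f = 0 := h1 W hW _
    have : f = S.g ≫ hS.exact.desc f hf := (hS.exact.g_desc f hf).symm
    rw [this, h3 W hW (hS.exact.desc f hf), comp_zero]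

lemma isTorsionFreeClass_rightPerp (P : Set C) : IsTorsionFreeClass C (rightPerp P) := by
  constructor
  · intro J _ F c hc hmem W hW f
    refine hc.hom_ext (fun jj => ?_)
    rw [zero_comp]
    exact hmem jj W hW _
  · intro S hS h1 h3 W hW f
    have := hS.mono_f
    have hf : f ≫ S.g = 0 := h3 W hW _
    have : f = hS.exact.lift f hf ≫ S.f := (hS.exact.lift_f f hf).symm
    rw [this, h1 W hW (hS.exact.lift f hf), zero_comp]

end AuxGeneral

section AuxAdj

variable {D : Type u} [Category.{v} D] [Abelian D]
    {C : Type u} [Category.{v} C] [Abelian C]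
    (j : C ⥤ D) (r : D ⥤ C) (adj : j ⊣ r)
    [PreservesFiniteLimits r] [PreservesFiniteColimits r] [j.Full] [j.Faithful]

include adj

/-- Any quotient of an object in the image of `j` lies in `^⊥S`. -/
lemma quotMemLeftPerp {W : C} {X : D} (e : j.obj W ⟶ X) [Epi e] :
    X ∈ leftPerp (kerSet r) := by
  intro S hS f
  have h2 : adj.homEquiv _ _ (e ≫ f) = adj.homEquiv _ _ (0 : j.obj W ⟶ S) :=
    hS.eq_of_tgt _ _
  have h3 : e ≫ f = 0 := (adj.homEquiv _ _).injective h2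
  rw [← cancel_epi e, h3, comp_zero]

lemma jObjMemLeftPerp (W : C) : j.obj W ∈ leftPerp (kerSet r) :=
  quotMemLeftPerp j r adj (𝟙 (j.obj W))

/-- If `X ∈ ^⊥S` and `r.map f = 0` then `f = 0`. -/
lemma eqZeroOfLeftPerp {X Y : D} (hX : X ∈ leftPerp (kerSet r))
    {f : X ⟶ Y} (hf : r.map f = 0) : f = 0 := by
  have := adj.isRightAdjoint
  have fac : Abelian.factorThruImage f ≫ Abelian.image.ι f = f := Abelian.image.fac f
  have hepi : Epi (r.map (Abelian.factorThruImage f)) :=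
    preserves_epi_of_preservesColimit r _
  have hmono : Mono (r.map (Abelian.image.ι f)) :=
    preserves_mono_of_preservesLimit r _
  have h0 : r.map (Abelian.factorThruImage f) ≫ r.map (Abelian.image.ι f) = 0 := by
    rw [← r.map_comp, fac, hf]
  have hι : r.map (Abelian.image.ι f) = 0 := by
    rw [← cancel_epi (r.map (Abelian.factorThruImage f)), h0, comp_zero]
  have hz : IsZero (r.obj (Abelian.image f)) := by
    rw [IsZero.iff_id_eq_zero, ← cancel_mono (r.map (Abelian.image.ι f)), hι,
      comp_zero, zero_comp]
  have he : Abelian.factorThruImage f = 0 := hX _ hz _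
  rw [← fac, he, zero_comp]

lemma unitCompMapCounit {T' : C} {A : D} (i : T' ⟶ r.obj A) :
    adj.unit.app T' ≫ r.map (j.map i ≫ adj.counit.app A) = i := by
  rw [r.map_comp, ← Category.assoc]
  have h1 : adj.unit.app T' ≫ r.map (j.map i) = i ≫ adj.unit.app (r.obj A) := by
    have := adj.unit.naturality i
    simpa using this.symm
  rw [h1, Category.assoc, adj.right_triangle_components, Category.comp_id]

lemma isIsoRMapCounit (X : D) : IsIso (r.map (adj.counit.app X)) := by
  have h := adj.right_triangle_components X
  have h2 : r.map (adj.counit.app X) = CategoryTheory.inv (adj.unit.app (r.obj X)) :=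
    IsIso.eq_inv_of_hom_inv_id h
  rw [h2]
  infer_instance

/-- Torsion decomposition in `D` associated to a torsion pair on `C`. -/
lemma existsSesD (p : TorsionPair C) (A : D) :
    ∃ (T F : D) (f : T ⟶ A) (g : A ⟶ F) (w : f ≫ g = 0),
      (T ∈ preimageSet r p.torsion ∩ leftPerp (kerSet r)) ∧
      F ∈ preimageSet r p.torsionFree ∧ (ShortComplex.mk f g w).ShortExact := by
  have := adj.isRightAdjoint
  obtain ⟨T', F', i, q, w, hT, hF, hse⟩ := p.exists_ses (r.obj A)
  haveI : Mono i := hse.mono_f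
  haveI : Epi q := hse.epi_g
  set φ : j.obj T' ⟶ A := j.map i ≫ adj.counit.app A with hφ
  set m := Abelian.image.ι φ with hm
  set e' := Abelian.factorThruImage φ with he'
  have fac : e' ≫ m = φ := Abelian.image.fac φ
  have key : (adj.unit.app T' ≫ r.map e') ≫ r.map m = i := by
    rw [Category.assoc, ← r.map_comp, fac]
    exact unitCompMapCounit j r adj i
  haveI hrm : Mono (r.map m) := preserves_mono_of_preservesLimit r m
  haveI hre : Epi (r.map e') := preserves_epi_of_preservesColimit r e'
  haveI hmono2 : Mono (adj.unit.app T' ≫ r.map e') := by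
    have h1 : Mono ((adj.unit.app T' ≫ r.map e') ≫ r.map m) := by
      rw [key]; infer_instance
    exact mono_of_mono _ (r.map m)
  haveI hmono3 : Mono (r.map e') := by
    have h2 : r.map e' =
        CategoryTheory.inv (adj.unit.app T') ≫ (adj.unit.app T' ≫ r.map e') := by
      simp
    rw [h2]; infer_instance
  haveI hiso : IsIso (r.map e') := isIso_of_mono_of_epi _
  haveI hisoc : IsIso (adj.unit.app T' ≫ r.map e') := inferInstance
  refine ⟨Abelian.image φ, cokernel m, m, cokernel.π m, cokernel.condition m,
    ⟨?_, quotMemLeftPerp j r adj e'⟩, ?_, ?_⟩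
  · exact memOfIsoColimits p.isTorsionClass.1
      (asIso (adj.unit.app T' ≫ r.map e')) hT
  · have iso1 : r.obj (cokernel m) ≅ cokernel (r.map m) := PreservesCokernel.iso r m
    have iso2 : cokernel (r.map m) ≅
        cokernel ((adj.unit.app T' ≫ r.map e') ≫ r.map m) :=
      (cokernelEpiComp (adj.unit.app T' ≫ r.map e') (r.map m)).symm
    have iso3 : cokernel ((adj.unit.app T' ≫ r.map e') ≫ r.map m) ≅ cokernel i :=
      cokernelIsoOfEq key
    have iso4 : cokernel i ≅ F' :=
      IsColimit.coconePointUniqueUpToIso (cokernelIsCokernel i) hse.exact.gIsCokernel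
    exact memOfIsoLimits p.isTorsionFreeClass.1
      (iso1 ≪≫ iso2 ≪≫ iso3 ≪≫ iso4).symm hF
  · exact
      { exact := ShortComplex.exact_of_g_is_cokernel _ (cokernelIsCokernel m)
        mono_f := inferInstance
        epi_g := inferInstance }

/-- Torsion decomposition in `C` associated to a torsion pair on `D`. -/
lemma existsSesC (q : TorsionPair D) (Z : C) :
    ∃ (T F : C) (f : T ⟶ Z) (g : Z ⟶ F) (w : f ≫ g = 0),
      T ∈ imageSet r q.torsion ∧ F ∈ imageSet r q.torsionFree ∧
      (ShortComplex.mk f g w).ShortExact := by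
  have := adj.isRightAdjoint
  obtain ⟨t, fo, a, b, w, ht, hf, hse⟩ := q.exists_ses (j.obj Z)
  have hmap := hse.map_of_exact r
  haveI hu : IsIso (adj.unit.app Z) := inferInstance
  have w' : (r.map a ≫ CategoryTheory.inv (adj.unit.app Z)) ≫
      (adj.unit.app Z ≫ r.map b) = 0 := by
    simp only [Category.assoc, IsIso.inv_hom_id_assoc, ← Functor.map_comp, w,
      Functor.map_zero]
  refine ⟨r.obj t, r.obj fo, r.map a ≫ CategoryTheory.inv (adj.unit.app Z),
    adj.unit.app Z ≫ r.map b, w', ⟨t, ht, ⟨Iso.refl _⟩⟩, ⟨fo, hf, ⟨Iso.refl _⟩⟩, ?_⟩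
  refine ShortComplex.shortExact_of_iso ?_ hmap
  refine ShortComplex.isoMk (Iso.refl _) (asIso (adj.unit.app Z)).symm (Iso.refl _)
    ?_ ?_
  · exact Category.id_comp _
  · exact ((asIso (adj.unit.app Z)).inv_hom_id_assoc (r.map b)).trans (Category.comp_id _).symm

/-- Hom vanishing for the image pair on `C`. -/
lemma homCZero (q : TorsionPair D)
    (hq1 : ∀ X ∈ q.torsion, j.obj (r.obj X) ∈ q.torsion) :
    ∀ ⦃T F : C⦄, T ∈ imageSet r q.torsion → F ∈ imageSet r q.torsionFree →
      ∀ f : T ⟶ F, f = 0 := by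
  intro T F hT hF f
  obtain ⟨A, hA, ⟨eA⟩⟩ := hT
  obtain ⟨B, hB, ⟨eB⟩⟩ := hF
  have := adj.isRightAdjoint
  have := adj.isLeftAdjoint
  set g : r.obj A ⟶ r.obj B := eA.hom ≫ f ≫ eB.inv with hg
  suffices hgz : g = 0 by
    have hfg : f = eA.inv ≫ g ≫ eB.hom := by simp [hg]
    rw [hfg, hgz]; simp
  have h1 : j.map g ≫ adj.counit.app B = 0 := q.hom_eq_zero (hq1 A hA) hB _
  haveI := isIsoRMapCounit j r adj B
  have hkι : kernel.ι (r.map (adj.counit.app B)) = 0 := by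
    rw [← cancel_mono (r.map (adj.counit.app B)), kernel.condition, zero_comp]
  have hz : IsZero (kernel (r.map (adj.counit.app B))) := by
    rw [IsZero.iff_id_eq_zero, ← cancel_mono (kernel.ι (r.map (adj.counit.app B))),
      hkι]
    simp
  have hker : kernel (adj.counit.app B) ∈ kerSet r :=
    hz.of_iso (PreservesKernel.iso r _)
  have hu : kernel.lift (adj.counit.app B) (j.map g) h1 = 0 :=
    jObjMemLeftPerp j r adj (r.obj A) _ hker _
  have hjg : j.map g = 0 := by
    rw [← kernel.lift_ι (adj.counit.app B) (j.map g) h1, hu, zero_comp]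
  apply j.map_injective
  rw [hjg, Functor.map_zero]

/-- Hom vanishing for the hat pair on `D`. -/
lemma homDZero (p : TorsionPair C) :
    ∀ ⦃X Y : D⦄, X ∈ preimageSet r p.torsion ∩ leftPerp (kerSet r) →
      Y ∈ preimageSet r p.torsionFree → ∀ f : X ⟶ Y, f = 0 := by
  intro X Y hX hY f
  exact eqZeroOfLeftPerp j r adj hX.2 (p.hom_eq_zero hX.1 hY (r.map f))

lemma imageTorsionEq (q : TorsionPair D)
    (hq1 : ∀ X ∈ q.torsion, j.obj (r.obj X) ∈ q.torsion) :
    imageSet r q.torsion = leftPerp (imageSet r q.torsionFree) := by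
  apply Set.Subset.antisymm
  · intro Z hZ W hW f
    exact homCZero j r adj q hq1 hZ hW f
  · intro Z hZ
    obtain ⟨T, F, f, g, w, hT, hF, hse⟩ := existsSesC j r adj q Z
    have hg : g = 0 := hZ F hF g
    haveI := hse.epi_g
    have hzF : IsZero F := by
      rw [IsZero.iff_id_eq_zero, ← cancel_epi g, hg]; simp
    haveI : IsIso f := hse.isIso_f_iff.mpr hzF
    obtain ⟨A, hA, ⟨e⟩⟩ := hT
    exact ⟨A, hA, ⟨e ≪≫ asIso f⟩⟩

lemma imageFreeEq (q : TorsionPair D)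
    (hq1 : ∀ X ∈ q.torsion, j.obj (r.obj X) ∈ q.torsion) :
    imageSet r q.torsionFree = rightPerp (imageSet r q.torsion) := by
  apply Set.Subset.antisymm
  · intro W hW T hT f
    exact homCZero j r adj q hq1 hT hW f
  · intro W hW
    obtain ⟨T, F, f, g, w, hT, hF, hse⟩ := existsSesC j r adj q W
    have hf : f = 0 := hW T hT f
    haveI := hse.mono_f
    have hzT : IsZero T := by
      rw [IsZero.iff_id_eq_zero, ← cancel_mono f, hf]; simp
    haveI : IsIso g := hse.isIso_g_iff.mpr hzT
    obtain ⟨B, hB, ⟨e⟩⟩ := hF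
    exact ⟨B, hB, ⟨e ≪≫ (asIso g).symm⟩⟩

lemma hatTorsionEq (p : TorsionPair C) :
    preimageSet r p.torsion ∩ leftPerp (kerSet r) =
      leftPerp (preimageSet r p.torsionFree) := by
  apply Set.Subset.antisymm
  · intro X hX Y hY f
    exact homDZero j r adj p hX hY f
  · intro X hX
    obtain ⟨T, F, f, g, w, hT, hF, hse⟩ := existsSesD j r adj p X
    have hg : g = 0 := hX F hF g
    haveI := hse.epi_g
    have hzF : IsZero F := by
      rw [IsZero.iff_id_eq_zero, ← cancel_epi g, hg]; simp
    haveI : IsIso f := hse.isIso_f_iff.mpr hzF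
    constructor
    · exact memOfIsoColimits p.isTorsionClass.1 (r.mapIso (asIso f)) hT.1
    · intro S hS h
      have h1 : f ≫ h = 0 := hT.2 S hS (f ≫ h)
      rw [← cancel_epi f, h1, comp_zero]

lemma hatFreeEq (p : TorsionPair C) :
    preimageSet r p.torsionFree =
      rightPerp (preimageSet r p.torsion ∩ leftPerp (kerSet r)) := by
  apply Set.Subset.antisymm
  · intro Y hY X hX f
    exact homDZero j r adj p hX hY f
  · intro Y hY
    obtain ⟨T, F, f, g, w, hT, hF, hse⟩ := existsSesD j r adj p Y
    have hf : f = 0 := hY T hT f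
    haveI := hse.mono_f
    have hzT : IsZero T := by
      rw [IsZero.iff_id_eq_zero, ← cancel_mono f, hf]; simp
    haveI : IsIso g := hse.isIso_g_iff.mpr hzT
    exact memOfIsoLimits p.isTorsionFreeClass.1 (r.mapIso (asIso g)).symm hF

/-- The torsion pair on `C` obtained from a suitable torsion pair on `D`. -/
def pairC (q : TorsionPair D)
    (hq1 : ∀ X ∈ q.torsion, j.obj (r.obj X) ∈ q.torsion) : TorsionPair C where
  torsion := imageSet r q.torsion
  torsionFree := imageSet r q.torsionFree
  isTorsionClass := by
    rw [imageTorsionEq j r adj q hq1]; exact isTorsionClass_leftPerp _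
  isTorsionFreeClass := by
    rw [imageFreeEq j r adj q hq1]; exact isTorsionFreeClass_rightPerp _
  hom_eq_zero := homCZero j r adj q hq1
  exists_ses := existsSesC j r adj q

/-- The torsion pair on `D` obtained from a torsion pair on `C`. -/
def pairD (p : TorsionPair C) : TorsionPair D where
  torsion := preimageSet r p.torsion ∩ leftPerp (kerSet r)
  torsionFree := preimageSet r p.torsionFree
  isTorsionClass := by
    rw [hatTorsionEq j r adj p]; exact isTorsionClass_leftPerp _
  isTorsionFreeClass := by
    rw [hatFreeEq j r adj p]; exact isTorsionFreeClass_rightPerp _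
  hom_eq_zero := homDZero j r adj p
  exists_ses := existsSesD j r adj p

lemma pairDCond1 (p : TorsionPair C) :
    ∀ X ∈ (pairD j r adj p).torsion,
      j.obj (r.obj X) ∈ (pairD j r adj p).torsion := by
  intro X hX
  refine ⟨?_, jObjMemLeftPerp j r adj _⟩
  haveI := isIsoRMapCounit j r adj X
  exact memOfIsoColimits p.isTorsionClass.1
    (asIso (r.map (adj.counit.app X))).symm hX.1

lemma leftInvTorsion (q : TorsionPair D)
    (hq1 : ∀ X ∈ q.torsion, j.obj (r.obj X) ∈ q.torsion)
    (hq2 : q.torsion ⊆ leftPerp (kerSet r)) :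
    preimageSet r (imageSet r q.torsion) ∩ leftPerp (kerSet r) = q.torsion := by
  apply Set.Subset.antisymm
  · rintro X ⟨hX1, hX2⟩
    have hhom : ∀ Y ∈ q.torsionFree, ∀ f : X ⟶ Y, f = 0 := by
      intro Y hY f
      have hrf : r.map f = 0 :=
        homCZero j r adj q hq1 hX1 ⟨Y, hY, ⟨Iso.refl _⟩⟩ (r.map f)
      exact eqZeroOfLeftPerp j r adj hX2 hrf
    obtain ⟨t, fo, a, b, w, ht, hfo, hse⟩ := q.exists_ses X
    have hb : b = 0 := hhom fo hfo b
    haveI := hse.epi_g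
    have hzfo : IsZero fo := by
      rw [IsZero.iff_id_eq_zero, ← cancel_epi b, hb]; simp
    haveI : IsIso a := hse.isIso_f_iff.mpr hzfo
    exact memOfIsoColimits q.isTorsionClass.1 (asIso a) ht
  · intro X hX
    exact ⟨⟨X, hX, ⟨Iso.refl _⟩⟩, hq2 hX⟩

lemma leftInvFree (q : TorsionPair D)
    (hq1 : ∀ X ∈ q.torsion, j.obj (r.obj X) ∈ q.torsion)
    (hq2 : q.torsion ⊆ leftPerp (kerSet r)) :
    preimageSet r (imageSet r q.torsionFree) = q.torsionFree := by
  apply Set.Subset.antisymm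
  · intro Y hY
    have hhom : ∀ X ∈ q.torsion, ∀ f : X ⟶ Y, f = 0 := by
      intro X hX f
      have hrf : r.map f = 0 :=
        homCZero j r adj q hq1 ⟨X, hX, ⟨Iso.refl _⟩⟩ hY (r.map f)
      exact eqZeroOfLeftPerp j r adj (hq2 hX) hrf
    obtain ⟨t, fo, a, b, w, ht, hfo, hse⟩ := q.exists_ses Y
    have ha : a = 0 := hhom t ht a
    haveI := hse.mono_f
    have hzt : IsZero t := by
      rw [IsZero.iff_id_eq_zero, ← cancel_mono a, ha]; simp
    haveI : IsIso b := hse.isIso_g_iff.mpr hzt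
    exact memOfIsoLimits q.isTorsionFreeClass.1 (asIso b).symm hfo
  · intro Y hY
    exact ⟨Y, hY, ⟨Iso.refl _⟩⟩

lemma rightInvTorsion (p : TorsionPair C) :
    imageSet r (preimageSet r p.torsion ∩ leftPerp (kerSet r)) = p.torsion := by
  apply Set.Subset.antisymm
  · rintro Z ⟨X, ⟨hX1, _⟩, ⟨e⟩⟩
    exact memOfIsoColimits p.isTorsionClass.1 e hX1
  · intro T' hT'
    refine ⟨j.obj T', ⟨?_, jObjMemLeftPerp j r adj T'⟩,
      ⟨(asIso (adj.unit.app T')).symm⟩⟩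
    exact memOfIsoColimits p.isTorsionClass.1 (asIso (adj.unit.app T')) hT'

lemma rightInvFree (p : TorsionPair C) :
    imageSet r (preimageSet r p.torsionFree) = p.torsionFree := by
  apply Set.Subset.antisymm
  · rintro Z ⟨X, hX, ⟨e⟩⟩
    exact memOfIsoLimits p.isTorsionFreeClass.1 e hX
  · intro W hW
    refine ⟨j.obj W, ?_, ⟨(asIso (adj.unit.app W)).symm⟩⟩
    exact memOfIsoLimits p.isTorsionFreeClass.1 (asIso (adj.unit.app W)) hW

end AuxAdj

section ExtLemma

variable {C : Type u} [Category.{v} C] [HasZeroMorphisms C]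

lemma torsionPairExt {p q : TorsionPair C} (h1 : p.torsion = q.torsion)
    (h2 : p.torsionFree = q.torsionFree) : p = q := by
  cases p; cases q
  simp only at h1 h2
  subst h1; subst h2
  rfl

end ExtLemma

/-- **Theorem.** Let `(D, C, j, r)` be a distinguished co-Giraud subcategory.  There is a
one-to-one correspondence between torsion pairs `(X, Y)` on `D` with `jr(X) ⊆ X ⊆ ^⊥S`
(where `S = Ker r`) and torsion pairs `(T, F)` on `C`, given by `(X, Y) ↦ (r(X), r(Y))`
and `(T, F) ↦ (T̂, F̂)`. -/
theorem coGiraud_torsionPair_correspondence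
    {D : Type u} [Category.{v} D] [Abelian D]
    {C : Type u} [Category.{v} C] [Abelian C]
    (j : C ⥤ D) (r : D ⥤ C) (adj : j ⊣ r)
    [PreservesFiniteLimits r] [PreservesFiniteColimits r] [j.Full] [j.Faithful] :
    ∃ e : {q : TorsionPair D //
        (∀ X ∈ q.torsion, j.obj (r.obj X) ∈ q.torsion) ∧
        q.torsion ⊆ leftPerp (kerSet r)} ≃ TorsionPair C,
      (∀ q, (e q).torsion = imageSet r q.1.torsion ∧
            (e q).torsionFree = imageSet r q.1.torsionFree) ∧
      (∀ p, (e.symm p).1.torsion = preimageSet r p.torsion ∩ leftPerp (kerSet r) ∧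
            (e.symm p).1.torsionFree = preimageSet r p.torsionFree) := by
  refine ⟨{ toFun := fun q => pairC j r adj q.1 q.2.1
            invFun := fun p => ⟨pairD j r adj p, pairDCond1 j r adj p,
              Set.inter_subset_right⟩
            left_inv := ?_
            right_inv := ?_ }, fun q => ⟨rfl, rfl⟩, fun p => ⟨rfl, rfl⟩⟩
  · rintro ⟨q, hq1, hq2⟩
    refine Subtype.ext (torsionPairExt ?_ ?_)
    · exact leftInvTorsion j r adj q hq1 hq2
    · exact leftInvFree j r adj q hq1 hq2
  · intro p
    refine torsionPairExt ?_ ?_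
    · exact rightInvTorsion j r adj p
    · exact rightInvFree j r adj p

end TiltedGiraudPaper
end
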